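/- arXiv:2209.11164 — 5 statements merged into one kernel-verified Lean document; each statement's English description precedes it below -/
import Mathlib

section
/- Let P be column stochastic and irreducible with invariant distribution μ, and let P̂ = P − μ𝟙ᵀ. Then the operator norm of P̂ with respect to the ℓ²(1/μ) norm equals √λ₂, where λ₂ is the second largest eigenvalue of P*P with P* = diag(μ)Pᵀdiag(1/μ). -/
open Matrix BigOperators

/-- A matrix is column stochastic: nonnegative entries, each column sums to one. -/
def ColStoch {m : Type*} [Fintype m] (M : Matrix m m ℝ) : Prop :=
  (∀ i j, 0 ≤ M i j) ∧ ∀ j, ∑ i, M i j = 1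

/-- Irreducibility of a matrix via its pattern of nonzero entries:
the associated directed graph is strongly connected. -/
def Irred {m : Type*} [Fintype m] [DecidableEq m] (M : Matrix m m ℝ) : Prop :=
  ∀ i j, ∃ k : ℕ, 0 < k ∧ (M ^ k) i j ≠ 0

/-- Weighted inner product `⟨x,y⟩_w = ∑ i, x i * y i * w i`. -/
def innerW {m : Type*} [Fintype m] (w x y : m → ℝ) : ℝ := ∑ i, x i * y i * w i

/-- Weighted `ℓ²(w)` norm. -/
noncomputable def normW {m : Type*} [Fintype m] (w x : m → ℝ) : ℝ :=
  Real.sqrt (innerW w x x)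

/-- Operator norm of a matrix with respect to the `ℓ²(w)` norm. -/
noncomputable def opNormW {m : Type*} [Fintype m] (w : m → ℝ) (M : Matrix m m ℝ) : ℝ :=
  sInf {c | 0 ≤ c ∧ ∀ x, normW w (M.mulVec x) ≤ c * normW w x}

/-- Aggregation operator for the partition `{f⁻¹(i)}` of `Fin N`. -/
def Agg {N n : ℕ} (f : Fin N → Fin n) : Matrix (Fin n) (Fin N) ℝ :=
  fun i x => if f x = i then 1 else 0

/-- Disaggregation operator for the partition `{f⁻¹(i)}` and weight vector ν. -/
noncomputable def Disagg {N n : ℕ} (f : Fin N → Fin n) (ν : Fin N → ℝ) :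
    Matrix (Fin N) (Fin n) ℝ :=
  fun j i => if f j = i then ν j / (Agg f).mulVec ν i else 0

/-- Coarse approximation `C(ν) = A P D(ν)`. -/
noncomputable def CoarseC {N n : ℕ} (P : Matrix (Fin N) (Fin N) ℝ) (f : Fin N → Fin n)
    (ν : Fin N → ℝ) : Matrix (Fin n) (Fin n) ℝ := Agg f * P * Disagg f ν

/-- `P̂ = P - μ 𝟙ᵀ`. -/
def hatP {N : ℕ} (P : Matrix (Fin N) (Fin N) ℝ) (μ : Fin N → ℝ) :
    Matrix (Fin N) (Fin N) ℝ := P - vecMulVec μ 1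

/-- Coarse projection `S(ν) = D(ν)[A(I-P+μ𝟙ᵀ)D(ν)]⁻¹ A(I-P+μ𝟙ᵀ)`. -/
noncomputable def CoarseS {N n : ℕ} (P : Matrix (Fin N) (Fin N) ℝ) (f : Fin N → Fin n)
    (μ ν : Fin N → ℝ) : Matrix (Fin N) (Fin N) ℝ :=
  Disagg f ν * (Agg f * (1 - P + vecMulVec μ 1) * Disagg f ν)⁻¹ *
    (Agg f * (1 - P + vecMulVec μ 1))

/-- Orthogonal coarse projection `Π(ν) = D(ν) A`. -/
noncomputable def PiProj {N n : ℕ} (f : Fin N → Fin n) (ν : Fin N → ℝ) :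
    Matrix (Fin N) (Fin N) ℝ := Disagg f ν * Agg f

/-- Error propagation operator `J(ν) = P̂ (I - S(ν))`. -/
noncomputable def Jop {N n : ℕ} (P : Matrix (Fin N) (Fin N) ℝ) (f : Fin N → Fin n)
    (μ ν : Fin N → ℝ) : Matrix (Fin N) (Fin N) ℝ := hatP P μ * (1 - CoarseS P f μ ν)

/-- Spectrum (set of complex eigenvalues) of a real matrix. -/
noncomputable def specC {N : ℕ} (M : Matrix (Fin N) (Fin N) ℝ) : Set ℂ :=
  spectrum ℂ (M.map (Complex.ofReal))

/-- Spectral radius of a real matrix. -/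
noncomputable def specRad {N : ℕ} (M : Matrix (Fin N) (Fin N) ℝ) : ℝ :=
  sSup ((fun z : ℂ => ‖z‖) '' specC M)

/-- The `ℓ²(1/μ)`-adjoint `diag(μ) Mᵀ diag(1/μ)`. -/
noncomputable def adjW {N : ℕ} (μ : Fin N → ℝ) (M : Matrix (Fin N) (Fin N) ℝ) :
    Matrix (Fin N) (Fin N) ℝ :=
  Matrix.diagonal μ * Mᵀ * Matrix.diagonal (fun i => (μ i)⁻¹)

/-- The ε-inner product `⟨x,y⟩_ε = ⟨x,(I-Π(μ))y⟩_{1/μ} + ε ⟨x,Π(μ)y⟩_{1/μ}`. -/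
noncomputable def innerEps {N n : ℕ} (f : Fin N → Fin n) (μ : Fin N → ℝ) (ε : ℝ)
    (x y : Fin N → ℝ) : ℝ :=
  innerW (fun i => (μ i)⁻¹) x ((1 - PiProj f μ).mulVec y) +
    ε * innerW (fun i => (μ i)⁻¹) x ((PiProj f μ).mulVec y)

/-- The ε-norm. -/
noncomputable def normEps {N n : ℕ} (f : Fin N → Fin n) (μ : Fin N → ℝ) (ε : ℝ)
    (x : Fin N → ℝ) : ℝ := Real.sqrt (innerEps f μ ε x x)

/-- Operator norm induced by the ε-norm. -/
noncomputable def opNormEps {N n : ℕ} (f : Fin N → Fin n) (μ : Fin N → ℝ) (ε : ℝ)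
    (M : Matrix (Fin N) (Fin N) ℝ) : ℝ :=
  sInf {c | 0 ≤ c ∧ ∀ x, normEps f μ ε (M.mulVec x) ≤ c * normEps f μ ε x}
lemma ip_adj {N : ℕ} (μ : Fin N → ℝ) (hμ : ∀ i, 0 < μ i) (M : Matrix (Fin N) (Fin N) ℝ)
    (x z : Fin N → ℝ) :
    innerW (fun i => (μ i)⁻¹) (M.mulVec x) z
      = innerW (fun i => (μ i)⁻¹) x ((adjW μ M).mulVec z) := by
  unfold innerW adjW
  simp only [mulVec, dotProduct, Matrix.mul_apply, diagonal_apply, transpose_apply,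
    ite_mul, zero_mul, mul_ite, mul_zero, Finset.sum_ite_eq, Finset.sum_ite_eq',
    Finset.mem_univ, if_true]
  simp_rw [Finset.sum_mul, Finset.mul_sum]
  simp_rw [Finset.sum_mul]
  rw [Finset.sum_comm]
  refine Finset.sum_congr rfl fun j _ => Finset.sum_congr rfl fun i _ => ?_
  have h1 : μ j ≠ 0 := (hμ j).ne'
  have h2 : μ i ≠ 0 := (hμ i).ne'
  field_simp

lemma contractW {N : ℕ} (P : Matrix (Fin N) (Fin N) ℝ) (μ : Fin N → ℝ)
    (hP : ColStoch P) (hμpos : ∀ i, 0 < μ i) (hinv : P.mulVec μ = μ) (x : Fin N → ℝ) :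
    innerW (fun i => (μ i)⁻¹) (P.mulVec x) (P.mulVec x) ≤ innerW (fun i => (μ i)⁻¹) x x := by
  unfold innerW
  have key : ∀ i, (P.mulVec x i) ^ 2 ≤ μ i * ∑ j, P i j * x j ^ 2 * (μ j)⁻¹ := by
    intro i
    have cs := Finset.sum_mul_sq_le_sq_mul_sq Finset.univ
      (fun j => Real.sqrt (P i j * μ j)) (fun j => Real.sqrt (P i j * (μ j)⁻¹) * x j)
    have h1 : ∀ j, Real.sqrt (P i j * μ j) * (Real.sqrt (P i j * (μ j)⁻¹) * x j)
        = P i j * x j := by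
      intro j
      have hp : 0 ≤ P i j := hP.1 i j
      have hm : 0 < μ j := hμpos j
      rw [show Real.sqrt (P i j * μ j) * (Real.sqrt (P i j * (μ j)⁻¹) * x j)
          = Real.sqrt (P i j * μ j) * Real.sqrt (P i j * (μ j)⁻¹) * x j by ring,
        ← Real.sqrt_mul (mul_nonneg hp hm.le)]
      have : P i j * μ j * (P i j * (μ j)⁻¹) = (P i j) ^ 2 := by
        field_simp
      rw [this, Real.sqrt_sq hp]
    have h2 : ∀ j, Real.sqrt (P i j * μ j) ^ 2 = P i j * μ j := by
      intro j
      exact Real.sq_sqrt (mul_nonneg (hP.1 i j) (hμpos j).le)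
    have h3 : ∀ j, (Real.sqrt (P i j * (μ j)⁻¹) * x j) ^ 2 = P i j * x j ^ 2 * (μ j)⁻¹ := by
      intro j
      rw [mul_pow, Real.sq_sqrt (mul_nonneg (hP.1 i j) (inv_pos.mpr (hμpos j)).le)]; ring
    simp only [h1, h2, h3] at cs
    have hsum : ∑ j, P i j * μ j = μ i := by
      have := congrFun hinv i
      simpa [mulVec, dotProduct] using this
    rw [hsum] at cs
    simpa [mulVec, dotProduct] using cs
  calc ∑ i, P.mulVec x i * P.mulVec x i * (μ i)⁻¹
      ≤ ∑ i, (μ i * ∑ j, P i j * x j ^ 2 * (μ j)⁻¹) * (μ i)⁻¹ := by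
        apply Finset.sum_le_sum
        intro i _
        have := key i
        have hm : (0:ℝ) < (μ i)⁻¹ := inv_pos.mpr (hμpos i)
        nlinarith [sq_nonneg (P.mulVec x i)]
    _ = ∑ i, ∑ j, P i j * x j ^ 2 * (μ j)⁻¹ := by
        refine Finset.sum_congr rfl fun i _ => ?_
        have : μ i ≠ 0 := (hμpos i).ne'
        field_simp
    _ = ∑ j, x j ^ 2 * (μ j)⁻¹ := by
        rw [Finset.sum_comm]
        refine Finset.sum_congr rfl fun j _ => ?_
        rw [← Finset.sum_mul, ← Finset.sum_mul, hP.2 j, one_mul]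
    _ = ∑ i, x i * x i * (μ i)⁻¹ := by
        refine Finset.sum_congr rfl fun j _ => by ring

lemma vcomplete {N : ℕ} (μ : Fin N → ℝ) (hμpos : ∀ i, 0 < μ i) (v : Fin N → Fin N → ℝ)
    (horth : ∀ i j, innerW (fun i => (μ i)⁻¹) (v i) (v j) = if i = j then 1 else 0) :
    ∀ k l, ∑ i, v i k * v i l = if k = l then μ k else 0 := by
  set V : Matrix (Fin N) (Fin N) ℝ := Matrix.of (fun i k => v i k) with hV
  set D : Matrix (Fin N) (Fin N) ℝ := Matrix.diagonal (fun i => (μ i)⁻¹) with hD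
  have hgram : V * (D * Vᵀ) = 1 := by
    ext i j
    simp only [Matrix.mul_apply, Matrix.one_apply, hV, hD, Matrix.of_apply,
      diagonal_apply, transpose_apply, ite_mul, zero_mul, Finset.sum_ite_eq,
      Finset.mem_univ, if_true]
    have := horth i j
    unfold innerW at this
    rw [← this]
    exact Finset.sum_congr rfl fun k _ => by ring
  have hgram' : (D * Vᵀ) * V = 1 := mul_eq_one_comm.mp hgram
  intro k l
  have := congrFun (congrFun hgram' k) l
  simp only [Matrix.mul_apply, Matrix.one_apply, hV, hD, Matrix.of_apply,
    diagonal_apply, transpose_apply, ite_mul, zero_mul, Finset.sum_ite_eq,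
    Finset.mem_univ, if_true] at this
  have hsum : ∑ i, v i k * v i l = μ k * ∑ i, (μ k)⁻¹ * v i k * v i l := by
    rw [Finset.mul_sum]
    refine Finset.sum_congr rfl fun i _ => ?_
    rw [show μ k * ((μ k)⁻¹ * v i k * v i l) = (μ k * (μ k)⁻¹) * (v i k * v i l) by ring,
      mul_inv_cancel₀ (hμpos k).ne', one_mul]
  rw [hsum, this]
  by_cases h : k = l <;> simp [h, (hμpos k).ne']

lemma vexpand {N : ℕ} (μ : Fin N → ℝ) (hμpos : ∀ i, 0 < μ i) (v : Fin N → Fin N → ℝ)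
    (horth : ∀ i j, innerW (fun i => (μ i)⁻¹) (v i) (v j) = if i = j then 1 else 0)
    (x : Fin N → ℝ) (k : Fin N) :
    x k = ∑ i, innerW (fun i => (μ i)⁻¹) x (v i) * v i k := by
  have hcomp := vcomplete μ hμpos v horth
  unfold innerW
  simp_rw [Finset.sum_mul]
  rw [Finset.sum_comm]
  have : ∀ l, ∑ i, x l * v i l * (μ l)⁻¹ * v i k
      = x l * (μ l)⁻¹ * ∑ i, v i k * v i l := by
    intro l
    rw [Finset.mul_sum]
    exact Finset.sum_congr rfl fun i _ => by ring
  simp_rw [this, hcomp]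
  rw [Finset.sum_eq_single k]
  · simp [(hμpos k).ne']
  · intro b _ hb
    simp [Ne.symm hb]
  · simp

lemma ipParseval {N : ℕ} (μ : Fin N → ℝ) (hμpos : ∀ i, 0 < μ i) (v : Fin N → Fin N → ℝ)
    (horth : ∀ i j, innerW (fun i => (μ i)⁻¹) (v i) (v j) = if i = j then 1 else 0)
    (x y : Fin N → ℝ) :
    innerW (fun i => (μ i)⁻¹) x y
      = ∑ i, innerW (fun i => (μ i)⁻¹) x (v i) * innerW (fun i => (μ i)⁻¹) y (v i) := by
  conv_lhs => rw [innerW]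
  calc ∑ k, x k * y k * (μ k)⁻¹
      = ∑ k, x k * (∑ i, innerW (fun i => (μ i)⁻¹) y (v i) * v i k) * (μ k)⁻¹ := by
        refine Finset.sum_congr rfl fun k _ => ?_
        rw [← vexpand μ hμpos v horth y k]
    _ = ∑ k, ∑ i, innerW (fun i => (μ i)⁻¹) y (v i) * (x k * v i k * (μ k)⁻¹) := by
        refine Finset.sum_congr rfl fun k _ => ?_
        rw [Finset.mul_sum, Finset.sum_mul]
        refine Finset.sum_congr rfl fun i _ => by ring
    _ = ∑ i, innerW (fun i => (μ i)⁻¹) y (v i) * ∑ k, x k * v i k * (μ k)⁻¹ := by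
        rw [Finset.sum_comm]
        exact Finset.sum_congr rfl fun i _ => (Finset.mul_sum _ _ _).symm
    _ = ∑ i, innerW (fun i => (μ i)⁻¹) x (v i) * innerW (fun i => (μ i)⁻¹) y (v i) := by
        refine Finset.sum_congr rfl fun i _ => ?_
        simp only [innerW]
        rw [mul_comm]

lemma coeff_eig {N : ℕ} (μ : Fin N → ℝ) (hμpos : ∀ i, 0 < μ i) (v : Fin N → Fin N → ℝ)
    (horth : ∀ i j, innerW (fun i => (μ i)⁻¹) (v i) (v j) = if i = j then 1 else 0)
    (M : Matrix (Fin N) (Fin N) ℝ) (lam : Fin N → ℝ)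
    (heig : ∀ i, M.mulVec (v i) = lam i • v i) (x : Fin N → ℝ) (j : Fin N) :
    innerW (fun i => (μ i)⁻¹) (M.mulVec x) (v j)
      = lam j * innerW (fun i => (μ i)⁻¹) x (v j) := by
  have hMx : ∀ k, M.mulVec x k = ∑ i, innerW (fun i => (μ i)⁻¹) x (v i) * (lam i * v i k) := by
    intro k
    rw [mulVec, dotProduct]
    calc ∑ j', M k j' * x j'
        = ∑ j', M k j' * ∑ i, innerW (fun i => (μ i)⁻¹) x (v i) * v i j' := by
          refine Finset.sum_congr rfl fun j' _ => ?_
          rw [← vexpand μ hμpos v horth x j']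
      _ = ∑ j', ∑ i, innerW (fun i => (μ i)⁻¹) x (v i) * (M k j' * v i j') := by
          refine Finset.sum_congr rfl fun j' _ => ?_
          rw [Finset.mul_sum]
          refine Finset.sum_congr rfl fun i _ => by ring
      _ = ∑ i, innerW (fun i => (μ i)⁻¹) x (v i) * ∑ j', M k j' * v i j' := by
          rw [Finset.sum_comm]
          exact Finset.sum_congr rfl fun i _ => (Finset.mul_sum _ _ _).symm
      _ = ∑ i, innerW (fun i => (μ i)⁻¹) x (v i) * (lam i * v i k) := by
          refine Finset.sum_congr rfl fun i _ => ?_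
          congr 1
          have := congrFun (heig i) k
          simpa [mulVec, dotProduct, Pi.smul_apply] using this
  rw [innerW]
  calc ∑ k, M.mulVec x k * v j k * (μ k)⁻¹
      = ∑ k, ∑ i, innerW (fun i => (μ i)⁻¹) x (v i) * lam i * (v i k * v j k * (μ k)⁻¹) := by
        refine Finset.sum_congr rfl fun k _ => ?_
        rw [hMx k, Finset.sum_mul, Finset.sum_mul]
        refine Finset.sum_congr rfl fun i _ => by ring
    _ = ∑ i, innerW (fun i => (μ i)⁻¹) x (v i) * lam i * innerW (fun i => (μ i)⁻¹) (v i) (v j) := by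
        rw [Finset.sum_comm]
        refine Finset.sum_congr rfl fun i _ => ?_
        rw [← Finset.mul_sum]
        simp only [innerW]
    _ = lam j * innerW (fun i => (μ i)⁻¹) x (v j) := by
        simp_rw [horth]
        rw [Finset.sum_eq_single j]
        · simp [mul_comm]
        · intro b _ hb; simp [hb]
        · simp

/-- `‖P̂‖_{1/μ} = √λ₂` with λ₂ the second largest eigenvalue of `P* P`, where
the eigenvalues are enumerated in decreasing order with an `ℓ²(1/μ)`-orthonormal basis of
eigenvectors. -/
theorem stmt3 {N : ℕ} (hN : 2 ≤ N) (P : Matrix (Fin N) (Fin N) ℝ)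
    (μ : Fin N → ℝ) (hP : ColStoch P) (hirr : Irred P)
    (hμpos : ∀ i, 0 < μ i) (hμsum : ∑ i, μ i = 1) (hinv : P.mulVec μ = μ)
    (lam : Fin N → ℝ) (v : Fin N → Fin N → ℝ)
    (hanti : Antitone lam)
    (horth : ∀ i j, innerW (fun i => (μ i)⁻¹) (v i) (v j) = if i = j then 1 else 0)
    (heig : ∀ i, (adjW μ P * P).mulVec (v i) = lam i • v i) :
    opNormW (fun i => (μ i)⁻¹) (hatP P μ) = Real.sqrt (lam ⟨1, by omega⟩) := by
  set w : Fin N → ℝ := fun i => (μ i)⁻¹ with hw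
  set i0 : Fin N := ⟨0, by omega⟩ with hi0
  set i1 : Fin N := ⟨1, by omega⟩ with hi1
  set PP : Matrix (Fin N) (Fin N) ℝ := adjW μ P * P with hPP
  set c : (Fin N → ℝ) → Fin N → ℝ := fun x i => innerW w x (v i) with hc
  set d : Fin N → ℝ := fun i => innerW w μ (v i) with hd
  -- basic facts
  have hi01 : i0 ≠ i1 := by simp [hi0, hi1, Fin.ext_iff]
  have hle01 : i0 ≤ i1 := by simp [hi0, hi1, Fin.le_def]
  have hip_nonneg : ∀ y : Fin N → ℝ, 0 ≤ innerW w y y := by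
    intro y
    refine Finset.sum_nonneg fun k _ => ?_
    exact mul_nonneg (mul_self_nonneg _) (inv_pos.mpr (hμpos k)).le
  have hip_PP : ∀ x, innerW w (P.mulVec x) (P.mulVec x) = innerW w x (PP.mulVec x) := by
    intro x
    rw [ip_adj μ hμpos P, Matrix.mulVec_mulVec]
  have hquad : ∀ x, innerW w (P.mulVec x) (P.mulVec x) = ∑ i, lam i * (c x i)^2 := by
    intro x
    rw [hip_PP, ipParseval μ hμpos v horth x (PP.mulVec x)]
    refine Finset.sum_congr rfl fun i _ => ?_
    rw [coeff_eig μ hμpos v horth PP lam heig x i]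
    simp only [hc]
    ring
  have hipxx : ∀ x, innerW w x x = ∑ i, (c x i)^2 := by
    intro x
    rw [ipParseval μ hμpos v horth x x]
    exact Finset.sum_congr rfl fun i _ => (sq (c x i)).symm
  have hPPμ : PP.mulVec μ = μ := by
    rw [hPP, ← Matrix.mulVec_mulVec, hinv]
    funext j
    simp only [adjW, mulVec, dotProduct, Matrix.mul_apply, diagonal_apply, transpose_apply,
      ite_mul, zero_mul, mul_ite, mul_zero, Finset.sum_ite_eq, Finset.sum_ite_eq',
      Finset.mem_univ, if_true]
    have h1 : ∀ i, μ j * P i j * (μ i)⁻¹ * μ i = μ j * P i j := by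
      intro i
      rw [mul_assoc, inv_mul_cancel₀ (hμpos i).ne', mul_one]
    simp_rw [h1]
    rw [← Finset.mul_sum, hP.2 j, mul_one]
  have hd_eig : ∀ i, lam i * d i = d i := by
    intro i
    have h := coeff_eig μ hμpos v horth PP lam heig μ i
    rw [hPPμ] at h
    exact h.symm
  have hμμ : innerW w μ μ = 1 := by
    rw [← hμsum]
    refine Finset.sum_congr rfl fun k _ => ?_
    rw [hw, mul_assoc, mul_inv_cancel₀ (hμpos k).ne', mul_one]
  have hdsum : ∑ i, (d i)^2 = 1 := by
    have h : innerW w μ μ = ∑ i, d i * d i := ipParseval μ hμpos v horth μ μ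
    rw [hμμ] at h
    calc ∑ i, (d i)^2 = ∑ i, d i * d i := Finset.sum_congr rfl fun i _ => sq (d i)
      _ = 1 := h.symm
  have hlam_val : ∀ i, lam i = innerW w (P.mulVec (v i)) (P.mulVec (v i)) := by
    intro i
    rw [hquad (v i)]
    have hcv : ∀ j, c (v i) j = if i = j then 1 else 0 := fun j => horth i j
    simp_rw [hcv]
    rw [Finset.sum_eq_single i]
    · simp
    · intro b _ hb
      simp [Ne.symm hb]
    · simp
  have hlam_nonneg : ∀ i, 0 ≤ lam i := by
    intro i
    rw [hlam_val i]
    exact hip_nonneg _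
  have hlam0 : lam i0 ≤ 1 := by
    rw [hlam_val i0]
    have h := contractW P μ hP hμpos hinv (v i0)
    have h2 := horth i0 i0
    simp only [if_pos rfl] at h2
    rw [h2] at h
    exact h
  have hlam01 : lam i1 ≤ lam i0 := hanti hle01
  have hlam1_ge : ∀ i, i ≠ i0 → lam i ≤ lam i1 := by
    intro i hi
    refine hanti ?_
    have hv1 : (i1 : ℕ) = 1 := rfl
    have hne : (i : ℕ) ≠ 0 := by
      intro h
      exact hi (Fin.ext h)
    rw [Fin.le_def, hv1]
    omega
  have hPsum : ∀ x : Fin N → ℝ, ∑ k, P.mulVec x k = ∑ k, x k := by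
    intro x
    simp only [mulVec, dotProduct]
    rw [Finset.sum_comm]
    refine Finset.sum_congr rfl fun j _ => ?_
    rw [← Finset.sum_mul, hP.2 j, one_mul]
  have hs_eq : ∀ x : Fin N → ℝ, (∑ k, x k) = ∑ i, c x i * d i := by
    intro x
    have h1 : innerW w x μ = ∑ k, x k := by
      refine Finset.sum_congr rfl fun k _ => ?_
      rw [hw, mul_assoc, mul_inv_cancel₀ (hμpos k).ne', mul_one]
    rw [← h1, ipParseval μ hμpos v horth x μ]
  have hhat : ∀ x, (hatP P μ).mulVec x = fun k => P.mulVec x k - μ k * (∑ j, x j) := by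
    intro x
    funext k
    simp only [hatP, Matrix.sub_mulVec, Pi.sub_apply]
    congr 1
    simp only [mulVec, dotProduct, vecMulVec_apply, Pi.one_apply, mul_one]
    rw [Finset.mul_sum]
  have hnormhat : ∀ x, innerW w ((hatP P μ).mulVec x) ((hatP P μ).mulVec x)
      = innerW w (P.mulVec x) (P.mulVec x) - (∑ k, x k)^2 := by
    intro x
    rw [hhat x]
    show ∑ k, (P.mulVec x k - μ k * (∑ j, x j)) * (P.mulVec x k - μ k * (∑ j, x j)) * w k
      = (∑ k, P.mulVec x k * P.mulVec x k * w k) - (∑ k, x k)^2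
    have hterm : ∀ k, (P.mulVec x k - μ k * (∑ j, x j)) * (P.mulVec x k - μ k * (∑ j, x j)) * w k
        = P.mulVec x k * P.mulVec x k * w k
          - (2 * (∑ j, x j)) * P.mulVec x k + (∑ j, x j)^2 * μ k := by
      intro k
      have hμk : μ k ≠ 0 := (hμpos k).ne'
      rw [hw]
      field_simp
      ring
    simp_rw [hterm]
    rw [Finset.sum_add_distrib, Finset.sum_sub_distrib, ← Finset.mul_sum, ← Finset.mul_sum,
      hPsum x, hμsum]
    ring
  -- upper bound
  have hUB : ∀ x, innerW w ((hatP P μ).mulVec x) ((hatP P μ).mulVec x)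
      ≤ lam i1 * innerW w x x := by
    intro x
    rw [hnormhat x, hquad x, hipxx x, hs_eq x]
    set S : Finset (Fin N) := Finset.univ.filter (fun i => d i ≠ 0) with hS
    have hd0 : ∀ i, i ∉ S → d i = 0 := by
      intro i hi
      by_contra h
      exact hi (Finset.mem_filter.mpr ⟨Finset.mem_univ i, h⟩)
    have hSlam : ∀ i ∈ S, lam i = 1 := by
      intro i hi
      have hdi : d i ≠ 0 := (Finset.mem_filter.mp hi).2
      have h1 : lam i * d i = 1 * d i := by rw [one_mul]; exact hd_eig i
      exact mul_right_cancel₀ hdi h1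
    have hcd : (∑ i, c x i * d i) = ∑ i ∈ S, c x i * d i := by
      refine (Finset.sum_subset (Finset.subset_univ S) fun i _ hi => ?_).symm
      rw [hd0 i hi, mul_zero]
    have hdS : ∑ i ∈ S, (d i)^2 = 1 := by
      rw [← hdsum]
      refine Finset.sum_subset (Finset.subset_univ S) fun i _ hi => ?_
      rw [hd0 i hi]
      ring
    have hSne : S.Nonempty := by
      rcases Finset.eq_empty_or_nonempty S with h | h
      · rw [h, Finset.sum_empty] at hdS
        norm_num at hdS
      · exact h
    rcases le_or_gt 1 (lam i1) with hcase | hcase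
    · -- lam i1 ≥ 1 : then all lam i ≤ lam i1
      have hall : ∀ i, lam i ≤ lam i1 := by
        intro i
        by_cases hi : i = i0
        · rw [hi]; exact hlam0.trans hcase
        · exact hlam1_ge i hi
      have h1 : ∑ i, lam i * (c x i)^2 ≤ ∑ i, lam i1 * (c x i)^2 :=
        Finset.sum_le_sum fun i _ => mul_le_mul_of_nonneg_right (hall i) (sq_nonneg _)
      rw [← Finset.mul_sum] at h1
      nlinarith [sq_nonneg (∑ i ∈ S, c x i * d i)]
    · -- lam i1 < 1 : S = {i0}
      have hS0 : S = {i0} := by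
        have hsub : S ⊆ {i0} := by
          intro i hi
          rw [Finset.mem_singleton]
          by_contra h
          have := hSlam i hi
          have := hlam1_ge i h
          linarith
        rcases Finset.subset_singleton_iff.mp hsub with h | h
        · exact absurd h hSne.ne_empty
        · exact h
      have hd0sq : (d i0)^2 = 1 := by
        rw [hS0, Finset.sum_singleton] at hdS
        exact hdS
      have hlami0 : lam i0 = 1 := hSlam i0 (by rw [hS0]; exact Finset.mem_singleton_self i0)
      rw [hS0, Finset.sum_singleton] at hcd
      rw [hcd]
      have hsq : (c x i0 * d i0)^2 = (c x i0)^2 := by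
        rw [mul_pow, hd0sq, mul_one]
      rw [hsq]
      rw [← Finset.add_sum_erase _ _ (Finset.mem_univ i0),
        ← Finset.add_sum_erase _ (fun i => (c x i)^2) (Finset.mem_univ i0)]
      have herase : ∑ i ∈ Finset.univ.erase i0, lam i * (c x i)^2
          ≤ ∑ i ∈ Finset.univ.erase i0, lam i1 * (c x i)^2 := by
        refine Finset.sum_le_sum fun i hi => ?_
        exact mul_le_mul_of_nonneg_right (hlam1_ge i (Finset.ne_of_mem_erase hi)) (sq_nonneg _)
      rw [← Finset.mul_sum] at herase
      have hsum_nn : (0:ℝ) ≤ ∑ i ∈ Finset.univ.erase i0, (c x i)^2 :=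
        Finset.sum_nonneg fun i _ => sq_nonneg _
      nlinarith [hlam_nonneg i1, sq_nonneg (c x i0)]
  -- lower bound witness
  obtain ⟨a, b, hab, hortho⟩ : ∃ a b : ℝ, a^2 + b^2 = 1 ∧ a * d i0 + b * d i1 = 0 := by
    rcases eq_or_ne ((d i0)^2 + (d i1)^2) 0 with h | h
    · refine ⟨1, 0, by norm_num, ?_⟩
      have h0 : d i0 = 0 := by nlinarith [sq_nonneg (d i0), sq_nonneg (d i1)]
      have h1 : d i1 = 0 := by nlinarith [sq_nonneg (d i0), sq_nonneg (d i1)]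
      rw [h0, h1]; ring
    · have hpos : 0 < (d i0)^2 + (d i1)^2 := by
        rcases lt_or_eq_of_le (by positivity : (0:ℝ) ≤ (d i0)^2 + (d i1)^2) with h' | h'
        · exact h'
        · exact absurd h'.symm h
      set r := Real.sqrt ((d i0)^2 + (d i1)^2) with hr
      have hrpos : 0 < r := Real.sqrt_pos.mpr hpos
      have hr2 : r^2 = (d i0)^2 + (d i1)^2 := Real.sq_sqrt hpos.le
      refine ⟨-(d i1) / r, d i0 / r, ?_, ?_⟩
      · field_simp
        ring
        rw [hr2]
        ring
      · field_simp
        ring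
  set xs : Fin N → ℝ := fun k => a * v i0 k + b * v i1 k with hxs
  have hcx : ∀ i, c xs i = a * (if i0 = i then 1 else 0) + b * (if i1 = i then 1 else 0) := by
    intro i
    show ∑ k, (a * v i0 k + b * v i1 k) * v i k * w k = _
    have : ∀ k, (a * v i0 k + b * v i1 k) * v i k * w k
        = a * (v i0 k * v i k * w k) + b * (v i1 k * v i k * w k) := fun k => by ring
    simp_rw [this]
    rw [Finset.sum_add_distrib, ← Finset.mul_sum, ← Finset.mul_sum]
    rw [show (∑ k, v i0 k * v i k * w k) = innerW w (v i0) (v i) from rfl,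
      show (∑ k, v i1 k * v i k * w k) = innerW w (v i1) (v i) from rfl, horth, horth]
  have hx1 : innerW w xs xs = 1 := by
    rw [hipxx xs]
    simp_rw [hcx]
    rw [← Finset.sum_subset (Finset.subset_univ ({i0, i1} : Finset (Fin N))) ?_,
      Finset.sum_pair hi01]
    · simp [hi01, Ne.symm hi01, hab]
    · intro i _ hi
      rw [Finset.mem_insert, Finset.mem_singleton] at hi
      push_neg at hi
      simp [Ne.symm hi.1, Ne.symm hi.2]
  have hdi_sum : ∀ i, d i = ∑ k, v i k := by
    intro i
    show ∑ k, μ k * v i k * w k = ∑ k, v i k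
    refine Finset.sum_congr rfl fun k _ => ?_
    rw [hw, mul_comm (μ k) (v i k), mul_assoc, mul_inv_cancel₀ (hμpos k).ne', mul_one]
  have hxs_sum : ∑ k, xs k = 0 := by
    show ∑ k, (a * v i0 k + b * v i1 k) = 0
    rw [Finset.sum_add_distrib, ← Finset.mul_sum, ← Finset.mul_sum,
      ← hdi_sum i0, ← hdi_sum i1]
    exact hortho
  have hPxs : innerW w (P.mulVec xs) (P.mulVec xs) = a^2 * lam i0 + b^2 * lam i1 := by
    rw [hquad xs]
    simp_rw [hcx]
    rw [← Finset.sum_subset (Finset.subset_univ ({i0, i1} : Finset (Fin N))) ?_,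
      Finset.sum_pair hi01]
    · simp [hi01, Ne.symm hi01]
      ring
    · intro i _ hi
      rw [Finset.mem_insert, Finset.mem_singleton] at hi
      push_neg at hi
      simp [Ne.symm hi.1, Ne.symm hi.2]
  have hlow : lam i1 ≤ innerW w ((hatP P μ).mulVec xs) ((hatP P μ).mulVec xs) := by
    rw [hnormhat xs, hxs_sum, hPxs]
    nlinarith [sq_nonneg a, sq_nonneg b]
  -- final assembly
  have hT : Real.sqrt (lam i1) ∈
      {cc : ℝ | 0 ≤ cc ∧ ∀ x, normW w ((hatP P μ).mulVec x) ≤ cc * normW w x} := by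
    constructor
    · exact Real.sqrt_nonneg _
    · intro y
      show Real.sqrt (innerW w _ _) ≤ _ * Real.sqrt (innerW w y y)
      calc Real.sqrt (innerW w ((hatP P μ).mulVec y) ((hatP P μ).mulVec y))
          ≤ Real.sqrt (lam i1 * innerW w y y) := Real.sqrt_le_sqrt (hUB y)
        _ = Real.sqrt (lam i1) * Real.sqrt (innerW w y y) :=
            Real.sqrt_mul (hlam_nonneg i1) _
  have hxs_norm : normW w xs = 1 := by
    show Real.sqrt (innerW w xs xs) = 1
    rw [hx1, Real.sqrt_one]
  show opNormW w (hatP P μ) = Real.sqrt (lam i1)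
  rw [opNormW]
  apply le_antisymm
  · exact csInf_le ⟨0, fun cc hcc => hcc.1⟩ hT
  · refine le_csInf ⟨Real.sqrt (lam i1), hT⟩ ?_
    intro cc hcc
    have h2 := hcc.2 xs
    rw [hxs_norm, mul_one] at h2
    have h3 : Real.sqrt (lam i1) ≤ normW w ((hatP P μ).mulVec xs) :=
      Real.sqrt_le_sqrt hlow
    exact h3.trans h2
end

section
/- Let P be column stochastic and irreducible with invariant distribution μ. Then ‖P − μ𝟙ᵀ‖_{1/μ} < 1 if and only if PᵀP is irreducible. -/
open Matrix BigOperators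

namespace Aux4
variable {N : ℕ}

lemma pow_entry_nonneg (A : Matrix (Fin N) (Fin N) ℝ) (hA : ∀ i j, 0 ≤ A i j) :
    ∀ k i j, 0 ≤ (A ^ k) i j := by
  intro k
  induction k with
  | zero => intro i j; simp [Matrix.one_apply]; split <;> norm_num
  | succ k ih =>
      intro i j
      rw [pow_succ, Matrix.mul_apply]
      exact Finset.sum_nonneg fun m _ => mul_nonneg (ih i m) (hA m j)

lemma pattern_pow (A B : Matrix (Fin N) (Fin N) ℝ)
    (hA : ∀ i j, 0 ≤ A i j) (hB : ∀ i j, 0 ≤ B i j)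
    (h : ∀ i j, A i j = 0 ↔ B i j = 0) :
    ∀ k i j, ((A ^ k) i j = 0 ↔ (B ^ k) i j = 0) := by
  intro k
  induction k with
  | zero => intro i j; simp
  | succ k ih =>
      intro i j
      rw [pow_succ, pow_succ, Matrix.mul_apply, Matrix.mul_apply,
        Finset.sum_eq_zero_iff_of_nonneg
          (fun m _ => mul_nonneg (pow_entry_nonneg A hA k i m) (hA m j)),
        Finset.sum_eq_zero_iff_of_nonneg
          (fun m _ => mul_nonneg (pow_entry_nonneg B hB k i m) (hB m j))]
      constructor <;> intro H m hm <;> have := H m hm <;>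
        rcases mul_eq_zero.1 this with h1 | h1
      · exact mul_eq_zero.2 (Or.inl ((ih i m).1 h1))
      · exact mul_eq_zero.2 (Or.inr ((h m j).1 h1))
      · exact mul_eq_zero.2 (Or.inl ((ih i m).2 h1))
      · exact mul_eq_zero.2 (Or.inr ((h m j).2 h1))

lemma irred_congr (A B : Matrix (Fin N) (Fin N) ℝ)
    (hA : ∀ i j, 0 ≤ A i j) (hB : ∀ i j, 0 ≤ B i j)
    (h : ∀ i j, A i j = 0 ↔ B i j = 0) : Irred A ↔ Irred B := by
  constructor <;> intro hI i j <;> obtain ⟨k, hk, hne⟩ := hI i j <;> exact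
    ⟨k, hk, fun hz => hne (by rw [pattern_pow A B hA hB h k i j] at *; tauto)⟩

lemma psd_mulVec_eq_zero (A : Matrix (Fin N) (Fin N) ℝ) (hsym : Aᵀ = A)
    (hpsd : ∀ y, 0 ≤ y ⬝ᵥ A.mulVec y) (x : Fin N → ℝ)
    (hx : x ⬝ᵥ A.mulVec x = 0) : A.mulVec x = 0 := by
  funext i
  set e : Fin N → ℝ := Pi.single i 1 with he
  set a : ℝ := (A.mulVec x) i with ha
  have hea : e ⬝ᵥ A.mulVec x = a := by
    simp [he, ha, dotProduct, Pi.single_apply]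
  have hxe : x ⬝ᵥ A.mulVec e = a := by
    rw [Matrix.dotProduct_mulVec, ← Matrix.mulVec_transpose, hsym,
      dotProduct_comm, hea]
  set b : ℝ := e ⬝ᵥ A.mulVec e with hb
  have hbnn : 0 ≤ b := hpsd e
  have key : ∀ t : ℝ, 0 ≤ 2 * t * a + t ^ 2 * b := by
    intro t
    have h0 := hpsd (x + t • e)
    have hexp : (x + t • e) ⬝ᵥ A.mulVec (x + t • e)
        = x ⬝ᵥ A.mulVec x + t * (e ⬝ᵥ A.mulVec x) + t * (x ⬝ᵥ A.mulVec e)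
          + t ^ 2 * (e ⬝ᵥ A.mulVec e) := by
      simp [Matrix.mulVec_add, Matrix.mulVec_smul, dotProduct_add,
        add_dotProduct, dotProduct_smul, smul_dotProduct,
        smul_eq_mul]
      ring
    rw [hexp, hx, hea, hxe] at h0
    linarith
  have hk := key (-a / (b + 1))
  have hb1 : (0:ℝ) < b + 1 := by linarith
  have h3 : 2 * (-a/(b+1)) * a + (-a/(b+1))^2*b = -(a^2*(b+2))/(b+1)^2 := by
    field_simp; ring
  rw [h3] at hk
  have h4 : a^2*(b+2) ≤ 0 := by
    have := (div_nonneg_iff.mp hk)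
    rcases this with ⟨h5, _⟩ | ⟨h5, h6⟩
    · linarith
    · nlinarith
  have : a = 0 := by nlinarith [sq_nonneg a]
  simpa [ha] using this


lemma pow_mulVec_fixed (Q : Matrix (Fin N) (Fin N) ℝ) (y : Fin N → ℝ)
    (h : Q.mulVec y = y) : ∀ k, (Q ^ k).mulVec y = y := by
  intro k
  induction k with
  | zero => simp
  | succ k ih => rw [pow_succ, ← Matrix.mulVec_mulVec, h, ih]

lemma pf_unique (Q : Matrix (Fin N) (Fin N) ℝ) (hnn : ∀ i j, 0 ≤ Q i j)
    (μ : Fin N → ℝ) (hμpos : ∀ i, 0 < μ i) (hQμ : Q.mulVec μ = μ)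
    (hirr : Irred Q) (x : Fin N → ℝ) (hx : Q.mulVec x = x) :
    ∃ c : ℝ, x = c • μ := by
  rcases isEmpty_or_nonempty (Fin N) with hN | hN
  · exact ⟨0, funext fun i => (IsEmpty.false i).elim⟩
  obtain ⟨i₀, -, hmax⟩ := Finset.exists_max_image Finset.univ (fun i => x i / μ i)
    ⟨Classical.arbitrary (Fin N), Finset.mem_univ _⟩
  set r : ℝ := x i₀ / μ i₀ with hr
  set y : Fin N → ℝ := r • μ - x with hy
  have hynn : ∀ i, 0 ≤ y i := by
    intro i
    have h1 : x i / μ i ≤ r := hmax i (Finset.mem_univ i)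
    have h2 : x i ≤ r * μ i := by
      rw [div_le_iff₀ (hμpos i)] at h1; linarith
    simp [hy, smul_eq_mul]; linarith
  have hyfix : Q.mulVec y = y := by
    rw [hy, Matrix.mulVec_sub, Matrix.mulVec_smul, hQμ, hx]
  have hy0 : y i₀ = 0 := by
    simp [hy, hr, smul_eq_mul, div_mul_cancel₀ _ (ne_of_gt (hμpos i₀))]
  have hyall : ∀ j, y j = 0 := by
    intro j
    obtain ⟨k, hk, hne⟩ := hirr i₀ j
    have hfix := pow_mulVec_fixed Q y hyfix k
    have h0 : ∑ m, (Q ^ k) i₀ m * y m = 0 := by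
      have := congrFun hfix i₀
      simpa [Matrix.mulVec, dotProduct, hy0] using this
    have hterm := (Finset.sum_eq_zero_iff_of_nonneg
      (fun m _ => mul_nonneg (pow_entry_nonneg Q hnn k i₀ m) (hynn m))).1 h0
      j (Finset.mem_univ j)
    rcases mul_eq_zero.1 hterm with h | h
    · exact absurd h hne
    · exact h
  refine ⟨r, ?_⟩
  funext i
  have := hyall i
  simp [hy, smul_eq_mul] at this ⊢
  linarith [this]


lemma innerW_eq_dot (w x y : Fin N → ℝ) :
    innerW w x y = x ⬝ᵥ (Matrix.diagonal w).mulVec y := by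
  simp [innerW, dotProduct, Matrix.mulVec_diagonal]
  exact Finset.sum_congr rfl fun i _ => by ring

lemma quad_eq (w : Fin N → ℝ) (P : Matrix (Fin N) (Fin N) ℝ) (x y : Fin N → ℝ) :
    innerW w (P.mulVec x) (P.mulVec y)
      = x ⬝ᵥ (Pᵀ * Matrix.diagonal w * P).mulVec y := by
  rw [innerW_eq_dot, mul_assoc, ← Matrix.mulVec_mulVec, ← Matrix.mulVec_mulVec,
    Matrix.dotProduct_mulVec x, Matrix.vecMul_transpose]

lemma contraction (P : Matrix (Fin N) (Fin N) ℝ) (μ : Fin N → ℝ)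
    (hP : ColStoch P) (hμpos : ∀ i, 0 < μ i) (hinv : P.mulVec μ = μ)
    (x : Fin N → ℝ) :
    innerW (fun i => (μ i)⁻¹) (P.mulVec x) (P.mulVec x)
      ≤ innerW (fun i => (μ i)⁻¹) x x := by
  set w : Fin N → ℝ := fun i => (μ i)⁻¹ with hw
  have hwpos : ∀ i, 0 < w i := fun i => inv_pos.2 (hμpos i)
  have hCS : ∀ i, (∑ j, P i j * x j) ^ 2
      ≤ (∑ j, P i j * μ j) * (∑ j, P i j * (x j)^2 * w j) := by
    intro i
    have := Finset.sum_mul_sq_le_sq_mul_sq Finset.univ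
      (fun j => Real.sqrt (P i j * μ j))
      (fun j => Real.sqrt (P i j * w j) * x j)
    have h1 : ∀ j, Real.sqrt (P i j * μ j) * (Real.sqrt (P i j * w j) * x j)
        = P i j * x j := by
      intro j
      rw [← mul_assoc, ← Real.sqrt_mul (mul_nonneg (hP.1 i j) (le_of_lt (hμpos j)))]
      have h2 : P i j * μ j * (P i j * w j) = (P i j)^2 := by
        simp only [hw]
        rw [show P i j * μ j * (P i j * (μ j)⁻¹) = P i j ^ 2 * (μ j * (μ j)⁻¹) by ring,
          mul_inv_cancel₀ (ne_of_gt (hμpos j)), mul_one]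
      rw [h2, Real.sqrt_sq (hP.1 i j)]
    have h3 : ∀ j, Real.sqrt (P i j * μ j) ^ 2 = P i j * μ j := fun j =>
      Real.sq_sqrt (mul_nonneg (hP.1 i j) (le_of_lt (hμpos j)))
    have h4 : ∀ j, (Real.sqrt (P i j * w j) * x j) ^ 2 = P i j * (x j)^2 * w j := by
      intro j
      rw [mul_pow, Real.sq_sqrt (mul_nonneg (hP.1 i j) (le_of_lt (hwpos j)))]
      ring
    calc (∑ j, P i j * x j) ^ 2
        = (∑ j, Real.sqrt (P i j * μ j) * (Real.sqrt (P i j * w j) * x j)) ^ 2 := by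
          rw [Finset.sum_congr rfl fun j _ => (h1 j).symm]
      _ ≤ (∑ j, Real.sqrt (P i j * μ j) ^ 2) * (∑ j, (Real.sqrt (P i j * w j) * x j) ^ 2) := this
      _ = (∑ j, P i j * μ j) * (∑ j, P i j * (x j)^2 * w j) := by
          rw [Finset.sum_congr rfl fun j _ => h3 j, Finset.sum_congr rfl fun j _ => h4 j]
  have hPμ : ∀ i, ∑ j, P i j * μ j = μ i := by
    intro i
    have := congrFun hinv i
    simpa [Matrix.mulVec, dotProduct] using this
  calc innerW w (P.mulVec x) (P.mulVec x)
      = ∑ i, (∑ j, P i j * x j) ^ 2 * w i := by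
        simp only [innerW, Matrix.mulVec, dotProduct, sq]
    _ ≤ ∑ i, (μ i * (∑ j, P i j * (x j)^2 * w j)) * w i := by
        apply Finset.sum_le_sum
        intro i _
        have := hCS i
        rw [hPμ i] at this
        exact mul_le_mul_of_nonneg_right this (le_of_lt (hwpos i))
    _ = ∑ i, ∑ j, P i j * (x j)^2 * w j := by
        apply Finset.sum_congr rfl
        intro i _
        have : μ i * w i = 1 := mul_inv_cancel₀ (ne_of_gt (hμpos i))
        calc (μ i * (∑ j, P i j * (x j)^2 * w j)) * w i
            = (μ i * w i) * (∑ j, P i j * (x j)^2 * w j) := by ring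
          _ = ∑ j, P i j * (x j)^2 * w j := by rw [this, one_mul]
    _ = ∑ j, (∑ i, P i j) * ((x j)^2 * w j) := by
        rw [Finset.sum_comm]
        apply Finset.sum_congr rfl
        intro j _
        rw [Finset.sum_mul]
        apply Finset.sum_congr rfl
        intro i _
        ring
    _ = innerW w x x := by
        simp only [innerW]
        exact Finset.sum_congr rfl fun j _ => by rw [hP.2 j]; ring


lemma innerW_nonneg (w : Fin N → ℝ) (hw : ∀ i, 0 ≤ w i) (x : Fin N → ℝ) :
    0 ≤ innerW w x x :=
  Finset.sum_nonneg fun i _ => mul_nonneg (mul_self_nonneg _) (hw i)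

lemma innerW_pos (w : Fin N → ℝ) (hw : ∀ i, 0 < w i) (x : Fin N → ℝ) (hx : x ≠ 0) :
    0 < innerW w x x := by
  obtain ⟨i, hi⟩ := Function.ne_iff.1 hx
  exact Finset.sum_pos' (fun j _ => mul_nonneg (mul_self_nonneg _) (le_of_lt (hw j)))
    ⟨i, Finset.mem_univ i, mul_pos (mul_self_pos.2 hi) (hw i)⟩

lemma quad_homog (A : Matrix (Fin N) (Fin N) ℝ) (c : ℝ) (x : Fin N → ℝ) :
    (c • x) ⬝ᵥ A.mulVec (c • x) = c ^ 2 * (x ⬝ᵥ A.mulVec x) := by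
  rw [Matrix.mulVec_smul, dotProduct_smul, smul_dotProduct]
  simp [smul_eq_mul]; ring

lemma exists_opbound (w : Fin N → ℝ) (hwpos : ∀ i, 0 < w i)
    (M : Matrix (Fin N) (Fin N) ℝ) :
    ∃ c : ℝ, 0 ≤ c ∧ ∀ x, normW w (M.mulVec x) ≤ c * normW w x := by
  set K : ℝ := ∑ i, (∑ j, (M i j)^2 / w j) * w i with hK
  have hKnn : 0 ≤ K :=
    Finset.sum_nonneg fun i _ => mul_nonneg
      (Finset.sum_nonneg fun j _ => div_nonneg (sq_nonneg _) (le_of_lt (hwpos j)))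
      (le_of_lt (hwpos i))
  refine ⟨Real.sqrt K, Real.sqrt_nonneg _, fun x => ?_⟩
  have hmain : innerW w (M.mulVec x) (M.mulVec x) ≤ K * innerW w x x := by
    have hCS : ∀ i, (∑ j, M i j * x j)^2
        ≤ (∑ j, (M i j)^2 / w j) * innerW w x x := by
      intro i
      have hcs := Finset.sum_mul_sq_le_sq_mul_sq Finset.univ
        (fun j => M i j / Real.sqrt (w j)) (fun j => Real.sqrt (w j) * x j)
      have h1 : ∀ j, M i j / Real.sqrt (w j) * (Real.sqrt (w j) * x j) = M i j * x j := by
        intro j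
        have : Real.sqrt (w j) ≠ 0 := ne_of_gt (Real.sqrt_pos.2 (hwpos j))
        field_simp
      have h2 : ∀ j, (M i j / Real.sqrt (w j))^2 = (M i j)^2 / w j := by
        intro j
        rw [div_pow, Real.sq_sqrt (le_of_lt (hwpos j))]
      have h3 : ∀ j, (Real.sqrt (w j) * x j)^2 = x j * x j * w j := by
        intro j
        rw [mul_pow, Real.sq_sqrt (le_of_lt (hwpos j))]
        ring
      calc (∑ j, M i j * x j)^2
          = (∑ j, M i j / Real.sqrt (w j) * (Real.sqrt (w j) * x j))^2 := by
            rw [Finset.sum_congr rfl fun j _ => h1 j]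
        _ ≤ (∑ j, (M i j / Real.sqrt (w j))^2) * (∑ j, (Real.sqrt (w j) * x j)^2) := hcs
        _ = (∑ j, (M i j)^2 / w j) * innerW w x x := by
            rw [Finset.sum_congr rfl fun j _ => h2 j,
              Finset.sum_congr rfl fun j _ => h3 j]
            rfl
    calc innerW w (M.mulVec x) (M.mulVec x)
        = ∑ i, (∑ j, M i j * x j)^2 * w i := by
          simp only [innerW, Matrix.mulVec, dotProduct, sq]
      _ ≤ ∑ i, ((∑ j, (M i j)^2 / w j) * innerW w x x) * w i := by
          apply Finset.sum_le_sum
          intro i _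
          exact mul_le_mul_of_nonneg_right (hCS i) (le_of_lt (hwpos i))
      _ = K * innerW w x x := by
          rw [hK, Finset.sum_mul]
          apply Finset.sum_congr rfl
          intro i _
          ring
  rw [normW, normW, ← Real.sqrt_mul hKnn]
  exact Real.sqrt_le_sqrt hmain

lemma pythagoras (μ : Fin N → ℝ) (hμpos : ∀ i, 0 < μ i) (hμsum : ∑ i, μ i = 1)
    (x : Fin N → ℝ) :
    innerW (fun i => (μ i)⁻¹) (x - (∑ i, x i) • μ) (x - (∑ i, x i) • μ)
      = innerW (fun i => (μ i)⁻¹) x x - (∑ i, x i)^2 := by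
  set s : ℝ := ∑ i, x i with hs
  have hper : ∀ i, (x i - s * μ i) * (x i - s * μ i) * (μ i)⁻¹
      = x i * x i * (μ i)⁻¹ - 2 * s * x i + s^2 * μ i := by
    intro i
    have h1 : μ i * (μ i)⁻¹ = 1 := mul_inv_cancel₀ (ne_of_gt (hμpos i))
    linear_combination (s^2 * μ i - 2 * s * x i) * h1
  calc innerW (fun i => (μ i)⁻¹) (x - s • μ) (x - s • μ)
      = ∑ i, (x i * x i * (μ i)⁻¹ - 2 * s * x i + s^2 * μ i) := by
        simp only [innerW, Pi.sub_apply, Pi.smul_apply, smul_eq_mul]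
        exact Finset.sum_congr rfl fun i _ => hper i
    _ = innerW (fun i => (μ i)⁻¹) x x - 2 * s * s + s^2 * 1 := by
        rw [Finset.sum_add_distrib, Finset.sum_sub_distrib, ← Finset.mul_sum,
          ← Finset.mul_sum, ← hs, hμsum]
        rfl
    _ = innerW (fun i => (μ i)⁻¹) x x - s^2 := by ring

lemma exists_pos_min (A : Matrix (Fin N) (Fin N) ℝ)
    (hpsd : ∀ x, 0 ≤ x ⬝ᵥ A.mulVec x)
    (hker : ∀ x, x ⬝ᵥ A.mulVec x = 0 → (∑ i, x i) = 0 → x = 0) :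
    ∃ m : ℝ, 0 < m ∧ ∀ x, (∑ i, x i) = 0 → m * (∑ i, (x i)^2) ≤ x ⬝ᵥ A.mulVec x := by
  classical
  set K : Set (Fin N → ℝ) := {x | (∑ i, x i) = 0 ∧ (∑ i, (x i)^2) = 1} with hKdef
  have hnorm : ∀ x : Fin N → ℝ, (∑ i, x i) = 0 → x ≠ 0 →
      ((Real.sqrt (∑ i, (x i)^2))⁻¹ • x) ∈ K := by
    intro x hsum hx
    have hS : 0 < ∑ i, (x i)^2 := by
      obtain ⟨i, hi⟩ := Function.ne_iff.1 hx
      exact Finset.sum_pos' (fun j _ => sq_nonneg _)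
        ⟨i, Finset.mem_univ i, sq_pos_of_ne_zero hi⟩
    have hsq : ((Real.sqrt (∑ i, (x i)^2))⁻¹)^2 = (∑ i, (x i)^2)⁻¹ := by
      rw [inv_pow, Real.sq_sqrt (le_of_lt hS)]
    constructor
    · simp only [Pi.smul_apply, smul_eq_mul, ← Finset.mul_sum, hsum, mul_zero]
    · simp only [Pi.smul_apply, smul_eq_mul, mul_pow, ← Finset.mul_sum, hsq]
      exact inv_mul_cancel₀ (ne_of_gt hS)
  by_cases hne : K.Nonempty
  · have hg : Continuous fun x : Fin N → ℝ => x ⬝ᵥ A.mulVec x := by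
      simp only [dotProduct, Matrix.mulVec]
      exact continuous_finset_sum _ fun i _ => (continuous_apply i).mul
        (continuous_finset_sum _ fun j _ => continuous_const.mul (continuous_apply j))
    have hclosed : IsClosed K := by
      have h1 : IsClosed {x : Fin N → ℝ | (∑ i, x i) = 0} :=
        isClosed_eq (continuous_finset_sum _ fun i _ => continuous_apply i)
          continuous_const
      have h2 : IsClosed {x : Fin N → ℝ | (∑ i, (x i)^2) = 1} :=
        isClosed_eq (continuous_finset_sum _ fun i _ => (continuous_apply i).pow 2)
          continuous_const
      exact h1.inter h2
    have hbdd : Bornology.IsBounded K := by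
      apply Bornology.IsBounded.subset (Metric.isBounded_closedBall
        (x := (0 : Fin N → ℝ)) (r := 1))
      intro x hx
      rw [Metric.mem_closedBall, dist_zero_right]
      rw [pi_norm_le_iff_of_nonneg zero_le_one]
      intro i
      have h1 : (x i)^2 ≤ 1 := by
        rw [← hx.2]
        exact Finset.single_le_sum (fun j _ => sq_nonneg (x j)) (Finset.mem_univ i)
      rw [Real.norm_eq_abs, abs_le_one_iff_mul_self_le_one]
      nlinarith
    have hcompact : IsCompact K := Metric.isCompact_of_isClosed_isBounded hclosed hbdd
    obtain ⟨x₀, hx₀K, hmin'⟩ := hcompact.exists_isMinOn hne hg.continuousOn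
    have hmin : ∀ y ∈ K, x₀ ⬝ᵥ A.mulVec x₀ ≤ y ⬝ᵥ A.mulVec y := fun y hy => hmin' hy
    set m : ℝ := x₀ ⬝ᵥ A.mulVec x₀ with hm
    have hmpos : 0 < m := by
      rcases lt_or_eq_of_le (hpsd x₀) with h | h
      · exact h
      · exfalso
        have hx₀0 : x₀ = 0 := hker x₀ h.symm hx₀K.1
        have := hx₀K.2
        rw [hx₀0] at this
        simp at this
    refine ⟨m, hmpos, fun x hsum => ?_⟩
    by_cases hx : x = 0
    · simp [hx]
    · have hS : 0 < ∑ i, (x i)^2 := by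
        obtain ⟨i, hi⟩ := Function.ne_iff.1 hx
        exact Finset.sum_pos' (fun j _ => sq_nonneg _)
          ⟨i, Finset.mem_univ i, sq_pos_of_ne_zero hi⟩
      have hu := hnorm x hsum hx
      have h1 := hmin _ hu
      rw [quad_homog, inv_pow, Real.sq_sqrt (le_of_lt hS)] at h1
      calc m * (∑ i, (x i)^2) ≤ ((∑ i, (x i)^2)⁻¹ * (x ⬝ᵥ A.mulVec x)) * (∑ i, (x i)^2) :=
            mul_le_mul_of_nonneg_right h1 (le_of_lt hS)
        _ = x ⬝ᵥ A.mulVec x := by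
            field_simp
  · refine ⟨1, one_pos, fun x hsum => ?_⟩
    by_cases hx : x = 0
    · simp [hx]
    · exact absurd ⟨_, hnorm x hsum hx⟩ hne

end Aux4

/-- `‖P̂‖_{1/μ} < 1` if and only if `PᵀP` is irreducible. -/
theorem stmt4 {N : ℕ} (P : Matrix (Fin N) (Fin N) ℝ)
    (μ : Fin N → ℝ) (hP : ColStoch P) (hirr : Irred P)
    (hμpos : ∀ i, 0 < μ i) (hμsum : ∑ i, μ i = 1) (hinv : P.mulVec μ = μ) :
    opNormW (fun i => (μ i)⁻¹) (hatP P μ) < 1 ↔ Irred (Pᵀ * P) := by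
  classical
  rcases isEmpty_or_nonempty (Fin N) with hE | hNe
  · constructor
    · intro _ i j
      exact (IsEmpty.false i).elim
    · intro _
      have h0 : (0:ℝ) ∈ {c | 0 ≤ c ∧ ∀ x,
          normW (fun i => (μ i)⁻¹) ((hatP P μ).mulVec x)
            ≤ c * normW (fun i => (μ i)⁻¹) x} :=
        ⟨le_refl 0, fun x => by simp [normW, innerW]⟩
      calc opNormW (fun i => (μ i)⁻¹) (hatP P μ) ≤ 0 :=
            csInf_le ⟨0, fun c hc => hc.1⟩ h0
        _ < 1 := one_pos
  haveI : Nonempty (Fin N) := hNe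
  set w : Fin N → ℝ := fun i => (μ i)⁻¹ with hw
  have hwpos : ∀ i, 0 < w i := fun i => inv_pos.2 (hμpos i)
  set R : Matrix (Fin N) (Fin N) ℝ := Pᵀ * Matrix.diagonal w * P with hR
  set Q : Matrix (Fin N) (Fin N) ℝ := Matrix.diagonal μ * R with hQ
  have hRentry : ∀ i j, R i j = ∑ k, P k i * w k * P k j := by
    intro i j
    rw [hR, Matrix.mul_apply]
    refine Finset.sum_congr rfl fun k _ => ?_
    rw [Matrix.mul_diagonal, Matrix.transpose_apply]
  have hQentry : ∀ i j, Q i j = μ i * R i j := fun i j => by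
    rw [hQ, Matrix.diagonal_mul]
  have hRsym : ∀ i j, R i j = R j i := by
    intro i j
    rw [hRentry, hRentry]
    exact Finset.sum_congr rfl fun k _ => by ring
  have hRnn : ∀ i j, 0 ≤ R i j := fun i j => by
    rw [hRentry]
    exact Finset.sum_nonneg fun k _ => mul_nonneg
      (mul_nonneg (hP.1 k i) (le_of_lt (hwpos k))) (hP.1 k j)
  have hQnn : ∀ i j, 0 ≤ Q i j := fun i j => by
    rw [hQentry]; exact mul_nonneg (le_of_lt (hμpos i)) (hRnn i j)
  have hcol : ∀ j, ∑ k, P k j = 1 := hP.2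
  have hones : Pᵀ.mulVec (fun _ => 1) = fun _ => 1 := by
    funext i
    simp only [Matrix.mulVec, dotProduct, Matrix.transpose_apply, mul_one]
    exact hcol i
  have hdw : (Matrix.diagonal w).mulVec μ = fun _ => 1 := by
    funext i
    rw [Matrix.mulVec_diagonal]
    exact inv_mul_cancel₀ (ne_of_gt (hμpos i))
  have hQμ : Q.mulVec μ = μ := by
    rw [hQ, hR, mul_assoc, ← Matrix.mulVec_mulVec, ← Matrix.mulVec_mulVec,
      ← Matrix.mulVec_mulVec, hinv, hdw, hones]
    funext i
    rw [Matrix.mulVec_diagonal, mul_one]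
  have hPtPnn : ∀ i j, 0 ≤ (Pᵀ * P) i j := by
    intro i j
    rw [Matrix.mul_apply]
    exact Finset.sum_nonneg fun k _ => mul_nonneg (hP.1 k i) (hP.1 k j)
  have hpat : ∀ i j, (Q i j = 0 ↔ (Pᵀ * P) i j = 0) := by
    intro i j
    rw [hQentry, hRentry, Matrix.mul_apply]
    constructor
    · intro h
      have h1 : ∑ k, P k i * w k * P k j = 0 := by
        rcases mul_eq_zero.1 h with h' | h'
        · exact absurd h' (ne_of_gt (hμpos i))
        · exact h'
      have h2 := (Finset.sum_eq_zero_iff_of_nonneg fun k _ => mul_nonneg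
        (mul_nonneg (hP.1 k i) (le_of_lt (hwpos k))) (hP.1 k j)).1 h1
      apply Finset.sum_eq_zero
      intro k hk
      have := h2 k hk
      rcases mul_eq_zero.1 this with h' | h'
      · rcases mul_eq_zero.1 h' with h'' | h''
        · rw [Matrix.transpose_apply, h'', zero_mul]
        · exact absurd h'' (ne_of_gt (hwpos k))
      · rw [h', mul_zero]
    · intro h
      have h2 := (Finset.sum_eq_zero_iff_of_nonneg fun k _ =>
        mul_nonneg (hP.1 k i) (hP.1 k j)).1 h
      have h1 : ∑ k, P k i * w k * P k j = 0 := by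
        apply Finset.sum_eq_zero
        intro k hk
        have := h2 k hk
        rcases mul_eq_zero.1 this with h' | h'
        · rw [h', zero_mul, zero_mul]
        · rw [h', mul_zero]
      rw [h1, mul_zero]
  have hIrrIff : Irred (Pᵀ * P) ↔ Irred Q :=
    (Aux4.irred_congr Q (Pᵀ * P) hQnn hPtPnn hpat).symm
  have hsetdef : opNormW w (hatP P μ)
      = sInf {c | 0 ≤ c ∧ ∀ x, normW w ((hatP P μ).mulVec x) ≤ c * normW w x} := rfl
  have hbdd : BddBelow {c | 0 ≤ c ∧ ∀ x, normW w ((hatP P μ).mulVec x) ≤ c * normW w x} :=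
    ⟨0, fun c hc => hc.1⟩
  have hvmv : ∀ x : Fin N → ℝ, (vecMulVec μ (1 : Fin N → ℝ)).mulVec x
      = fun i => μ i * (∑ j, x j) := by
    intro x
    funext i
    simp only [Matrix.mulVec, dotProduct, Matrix.vecMulVec_apply, Pi.one_apply,
      mul_one, ← Finset.mul_sum]
  constructor
  · -- norm < 1 → Irred
    intro hlt
    rw [hIrrIff]
    by_contra hnI
    simp only [Irred, not_forall, not_exists, not_and, not_not] at hnI
    obtain ⟨i₀, j₀, hall⟩ := hnI
    set Sset : Set (Fin N) := {i | ∃ k, 0 < k ∧ (Q ^ k) i j₀ ≠ 0} with hSdef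
    set xstar : Fin N → ℝ := fun i => if i ∈ Sset then μ i else 0 with hxstar
    have hQdiag : ∀ j, 0 < Q j j := by
      intro j
      rw [hQentry, hRentry]
      apply mul_pos (hμpos j)
      obtain ⟨k, hk⟩ : ∃ k, P k j ≠ 0 := by
        by_contra hc
        push_neg at hc
        have := hcol j
        rw [Finset.sum_eq_zero (fun k _ => hc k)] at this
        norm_num at this
      have hPkpos : 0 < P k j := lt_of_le_of_ne (hP.1 k j) (Ne.symm hk)
      exact Finset.sum_pos' (fun m _ => mul_nonneg (mul_nonneg (hP.1 m j)
        (le_of_lt (hwpos m))) (hP.1 m j))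
        ⟨k, Finset.mem_univ k, mul_pos (mul_pos hPkpos (hwpos k)) hPkpos⟩
    have hj₀S : j₀ ∈ Sset := ⟨1, one_pos, by rw [pow_one]; exact ne_of_gt (hQdiag j₀)⟩
    have hi₀S : i₀ ∉ Sset := fun ⟨k, hk, hne⟩ => hne (hall k hk)
    have hclosure : ∀ i i', i ∈ Sset → Q i' i ≠ 0 → i' ∈ Sset := by
      rintro i i' ⟨k, hk, hkne⟩ hQne
      refine ⟨k + 1, Nat.succ_pos k, ?_⟩
      have hterm : 0 < Q i' i * (Q ^ k) i j₀ :=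
        mul_pos (lt_of_le_of_ne (hQnn i' i) (Ne.symm hQne))
          (lt_of_le_of_ne (Aux4.pow_entry_nonneg Q hQnn k i j₀) (Ne.symm hkne))
      have hsum : Q i' i * (Q ^ k) i j₀ ≤ (Q ^ (k + 1)) i' j₀ := by
        rw [pow_succ', Matrix.mul_apply]
        exact Finset.single_le_sum (fun m _ => mul_nonneg (hQnn i' m)
          (Aux4.pow_entry_nonneg Q hQnn k m j₀)) (Finset.mem_univ i)
      exact ne_of_gt (lt_of_lt_of_le hterm hsum)
    have hQS : ∀ i, i ∉ Sset → ∀ j, j ∈ Sset → Q i j = 0 := by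
      intro i hi j hj
      by_contra hne
      exact hi (hclosure j i hj hne)
    have hQS2 : ∀ i, i ∈ Sset → ∀ j, j ∉ Sset → Q i j = 0 := by
      intro i hi j hj
      have h1 : Q j i = 0 := hQS j hj i hi
      rw [hQentry] at h1 ⊢
      rcases mul_eq_zero.1 h1 with h' | h'
      · exact absurd h' (ne_of_gt (hμpos j))
      · rw [hRsym i j, h', mul_zero]
    have hQμ' : ∀ i, ∑ j, Q i j * μ j = μ i := by
      intro i
      have := congrFun hQμ i
      simpa [Matrix.mulVec, dotProduct] using this
    have hfix : Q.mulVec xstar = xstar := by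
      funext i
      simp only [Matrix.mulVec, dotProduct, hxstar]
      by_cases hi : i ∈ Sset
      · rw [if_pos hi]
        have : ∀ j, Q i j * (if j ∈ Sset then μ j else 0) = Q i j * μ j := by
          intro j
          by_cases hj : j ∈ Sset
          · rw [if_pos hj]
          · rw [if_neg hj, hQS2 i hi j hj, zero_mul, zero_mul]
        rw [Finset.sum_congr rfl fun j _ => this j]
        exact hQμ' i
      · rw [if_neg hi]
        apply Finset.sum_eq_zero
        intro j _
        by_cases hj : j ∈ Sset
        · rw [hQS i hi j hj, zero_mul]
        · rw [if_neg hj, mul_zero]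
    set s₀ : ℝ := ∑ i, xstar i with hs₀
    have hs₀pos : 0 < s₀ := by
      refine Finset.sum_pos' (fun i _ => ?_) ⟨j₀, Finset.mem_univ j₀, ?_⟩
      · simp only [hxstar]
        split
        · exact le_of_lt (hμpos i)
        · exact le_refl 0
      · simp only [hxstar, if_pos hj₀S]
        exact hμpos j₀
    have hs₀lt : s₀ < 1 := by
      rw [hs₀, ← hμsum]
      apply Finset.sum_lt_sum
      · intro i _
        simp only [hxstar]
        split
        · exact le_refl _
        · exact le_of_lt (hμpos i)
      · refine ⟨i₀, Finset.mem_univ i₀, ?_⟩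
        simp only [hxstar, if_neg hi₀S]
        exact hμpos i₀
    set x : Fin N → ℝ := xstar - s₀ • μ with hx
    have hxsum : ∑ i, x i = 0 := by
      simp only [hx, Pi.sub_apply, Pi.smul_apply, smul_eq_mul]
      rw [Finset.sum_sub_distrib, ← Finset.mul_sum, hμsum, mul_one, ← hs₀, sub_self]
    have hxne : x ≠ 0 := by
      intro hc
      have h1 := congrFun hc i₀
      simp only [hx, Pi.sub_apply, Pi.smul_apply, smul_eq_mul, Pi.zero_apply,
        hxstar, if_neg hi₀S] at h1
      have : s₀ * μ i₀ = 0 := by linarith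
      rcases mul_eq_zero.1 this with h' | h'
      · exact absurd h' (ne_of_gt hs₀pos)
      · exact absurd h' (ne_of_gt (hμpos i₀))
    have hfixx : Q.mulVec x = x := by
      rw [hx, Matrix.mulVec_sub, Matrix.mulVec_smul, hfix, hQμ]
    have hRx : R.mulVec x = (Matrix.diagonal w).mulVec x := by
      have h2 : (Matrix.diagonal μ).mulVec (R.mulVec x) = x := by
        rw [Matrix.mulVec_mulVec, ← hQ, hfixx]
      funext i
      have h3 := congrFun h2 i
      rw [Matrix.mulVec_diagonal] at h3
      rw [Matrix.mulVec_diagonal]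
      have h4 : w i * (μ i * (R.mulVec x) i) = w i * x i := by rw [h3]
      rw [← mul_assoc, hw] at h4
      simpa [inv_mul_cancel₀ (ne_of_gt (hμpos i))] using h4
    have hPx : (hatP P μ).mulVec x = P.mulVec x := by
      show (P - vecMulVec μ 1).mulVec x = P.mulVec x
      rw [Matrix.sub_mulVec, hvmv x]
      funext i
      simp [hxsum]
    have hnormeq : innerW w (P.mulVec x) (P.mulVec x) = innerW w x x := by
      rw [Aux4.quad_eq, ← hR, hRx, ← Aux4.innerW_eq_dot]
    have hxpos : 0 < innerW w x x := Aux4.innerW_pos w hwpos x hxne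
    have hge1 : (1:ℝ) ≤ opNormW w (hatP P μ) := by
      obtain ⟨c₀, hc₀, hb₀⟩ := Aux4.exists_opbound w hwpos (hatP P μ)
      rw [hsetdef]
      refine le_csInf ⟨c₀, hc₀, hb₀⟩ ?_
      rintro c ⟨hcnn, hc⟩
      have h5 := hc x
      rw [hPx] at h5
      have h6 : normW w (P.mulVec x) = normW w x := by
        rw [normW, normW, hnormeq]
      rw [h6] at h5
      have h7 : 0 < normW w x := Real.sqrt_pos.2 hxpos
      nlinarith
    linarith
  · -- Irred → norm < 1
    intro hI
    have hQirr : Irred Q := hIrrIff.1 hI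
    set Amat : Matrix (Fin N) (Fin N) ℝ := Matrix.diagonal w - R with hA
    have hquadA : ∀ x : Fin N → ℝ, x ⬝ᵥ Amat.mulVec x
        = innerW w x x - innerW w (P.mulVec x) (P.mulVec x) := by
      intro x
      rw [hA, Matrix.sub_mulVec, dotProduct_sub, Aux4.quad_eq, ← hR,
        Aux4.innerW_eq_dot]
    have hApsd : ∀ x, 0 ≤ x ⬝ᵥ Amat.mulVec x := by
      intro x
      rw [hquadA]
      have := Aux4.contraction P μ hP hμpos hinv x
      rw [← hw] at this
      linarith
    have hAsym : Amatᵀ = Amat := by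
      rw [hA, Matrix.transpose_sub, Matrix.diagonal_transpose]
      congr 1
      apply Matrix.ext
      intro i j
      rw [Matrix.transpose_apply]
      exact hRsym j i
    have hker : ∀ x, x ⬝ᵥ Amat.mulVec x = 0 → (∑ i, x i) = 0 → x = 0 := by
      intro x hqz hsum
      have h0 : Amat.mulVec x = 0 := Aux4.psd_mulVec_eq_zero Amat hAsym hApsd x hqz
      have h1 : R.mulVec x = (Matrix.diagonal w).mulVec x := by
        rw [hA, Matrix.sub_mulVec, sub_eq_zero] at h0
        exact h0.symm
      have h2 : Q.mulVec x = x := by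
        rw [hQ, ← Matrix.mulVec_mulVec, h1]
        funext i
        rw [Matrix.mulVec_diagonal, Matrix.mulVec_diagonal]
        rw [← mul_assoc, mul_inv_cancel₀ (ne_of_gt (hμpos i)), one_mul]
      obtain ⟨c, hc⟩ := Aux4.pf_unique Q hQnn μ hμpos hQμ hQirr x h2
      have hc0 : c = 0 := by
        rw [hc] at hsum
        simp only [Pi.smul_apply, smul_eq_mul, ← Finset.mul_sum, hμsum, mul_one] at hsum
        exact hsum
      rw [hc, hc0, zero_smul]
    obtain ⟨m, hmpos, hmin⟩ := Aux4.exists_pos_min Amat hApsd hker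
    set Cmax : ℝ := ∑ i, w i with hCmax
    have hCpos : 0 < Cmax :=
      Finset.sum_pos (fun i _ => hwpos i) (Finset.univ_nonempty)
    set δ : ℝ := m / Cmax with hδ
    have hδpos : 0 < δ := div_pos hmpos hCpos
    set t : ℝ := max 0 (1 - δ) with ht
    have htlt : t < 1 := max_lt one_pos (by linarith)
    have htnn : 0 ≤ t := le_max_left _ _
    have hRquad_nn : ∀ z : Fin N → ℝ, 0 ≤ z ⬝ᵥ R.mulVec z := by
      intro z
      rw [hR, ← Aux4.quad_eq]
      exact Aux4.innerW_nonneg w (fun i => le_of_lt (hwpos i)) (P.mulVec z)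
    have hbound : ∀ z : Fin N → ℝ, (∑ i, z i) = 0 →
        z ⬝ᵥ R.mulVec z ≤ t * innerW w z z := by
      intro z hz
      have h1 := hmin z hz
      have h2 : innerW w z z ≤ Cmax * (∑ i, (z i)^2) := by
        rw [innerW, hCmax, Finset.sum_mul]
        apply Finset.sum_le_sum
        intro i _
        have hzle : z i ^ 2 ≤ ∑ j, (z j)^2 :=
          Finset.single_le_sum (fun j _ => sq_nonneg (z j)) (Finset.mem_univ i)
        nlinarith [mul_le_mul_of_nonneg_left hzle (le_of_lt (hwpos i))]
      have h3 : z ⬝ᵥ Amat.mulVec z = innerW w z z - z ⬝ᵥ R.mulVec z := by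
        rw [hquadA, Aux4.quad_eq, ← hR]
      have h4 : δ * innerW w z z ≤ m * (∑ i, (z i)^2) := by
        have h5 : δ * innerW w z z ≤ δ * (Cmax * (∑ i, (z i)^2)) :=
          mul_le_mul_of_nonneg_left h2 (le_of_lt hδpos)
        have h6 : δ * (Cmax * (∑ i, (z i)^2)) = m * (∑ i, (z i)^2) := by
          rw [hδ]
          field_simp
        linarith
      have h7 : z ⬝ᵥ R.mulVec z ≤ (1 - δ) * innerW w z z := by
        rw [h3] at h1
        nlinarith
      have h8 : (1 - δ) * innerW w z z ≤ t * innerW w z z :=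
        mul_le_mul_of_nonneg_right (le_max_right _ _)
          (Aux4.innerW_nonneg w (fun i => le_of_lt (hwpos i)) z)
      linarith
    have hmem : Real.sqrt t ∈
        {c | 0 ≤ c ∧ ∀ x, normW w ((hatP P μ).mulVec x) ≤ c * normW w x} := by
      refine ⟨Real.sqrt_nonneg _, fun x => ?_⟩
      set s : ℝ := ∑ i, x i with hs
      set z : Fin N → ℝ := x - s • μ with hz
      have hzsum : ∑ i, z i = 0 := by
        simp only [hz, Pi.sub_apply, Pi.smul_apply, smul_eq_mul]
        rw [Finset.sum_sub_distrib, ← Finset.mul_sum, hμsum, mul_one, ← hs, sub_self]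
      have hPz : (hatP P μ).mulVec x = P.mulVec z := by
        show (P - vecMulVec μ 1).mulVec x = P.mulVec z
        rw [Matrix.sub_mulVec, hvmv x, hz, Matrix.mulVec_sub, Matrix.mulVec_smul, hinv]
        funext i
        simp [hs, smul_eq_mul, mul_comm]
      have hpyth : innerW w z z ≤ innerW w x x := by
        have := Aux4.pythagoras μ hμpos hμsum x
        rw [← hw, ← hs, ← hz] at this
        nlinarith [sq_nonneg s]
      have hchain : innerW w (P.mulVec z) (P.mulVec z) ≤ t * innerW w x x := by
        have h1 : innerW w (P.mulVec z) (P.mulVec z) = z ⬝ᵥ R.mulVec z := by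
          rw [Aux4.quad_eq, ← hR]
        rw [h1]
        calc z ⬝ᵥ R.mulVec z ≤ t * innerW w z z := hbound z hzsum
          _ ≤ t * innerW w x x := mul_le_mul_of_nonneg_left hpyth htnn
      rw [hPz, normW, normW]
      calc Real.sqrt (innerW w (P.mulVec z) (P.mulVec z))
          ≤ Real.sqrt (t * innerW w x x) := Real.sqrt_le_sqrt hchain
        _ = Real.sqrt t * Real.sqrt (innerW w x x) := Real.sqrt_mul htnn _
    have hle : opNormW w (hatP P μ) ≤ Real.sqrt t := by
      rw [hsetdef]
      exact csInf_le hbdd hmem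
    have : Real.sqrt t < 1 := by
      rw [show (1:ℝ) = Real.sqrt 1 by simp]
      exact Real.sqrt_lt_sqrt htnn (by simpa using htlt)
    linarith
end

section
/- Let M ∈ ℝ^{k×k} be an irreducible column stochastic matrix with invariant probability vector z, and let v, w ∈ ℝ^k with 𝟙ᵀv ≠ 0 and zᵀw ≠ 0. Then the matrix I − M + v wᵀ is invertible, and z = (I − M + v wᵀ)^{−1} v wᵀ z. -/
open Matrix BigOperators

lemma pow_nonneg_entries {k : ℕ} (M : Matrix (Fin k) (Fin k) ℝ)
    (hM : ∀ i j, 0 ≤ M i j) : ∀ n i j, 0 ≤ (M ^ n) i j := by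
  intro n
  induction n with
  | zero => intro i j; rw [pow_zero]; by_cases h : i = j <;> simp [Matrix.one_apply, h]
  | succ n ih =>
      intro i j
      rw [pow_succ, Matrix.mul_apply]
      exact Finset.sum_nonneg fun l _ => mul_nonneg (ih i l) (hM l j)

lemma pow_mulVec_fixed {k : ℕ} (M : Matrix (Fin k) (Fin k) ℝ) {x : Fin k → ℝ}
    (hx : M.mulVec x = x) : ∀ n, (M ^ n).mulVec x = x := by
  intro n
  induction n with
  | zero => simp
  | succ n ih => rw [pow_succ, ← Matrix.mulVec_mulVec, hx, ih]


/-- for irreducible column stochastic `M` with invariant probability vector `z`,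
and `v, w` with `𝟙ᵀv ≠ 0`, `zᵀw ≠ 0`, the matrix `I - M + v wᵀ` is invertible and
`z = (I - M + v wᵀ)⁻¹ v wᵀ z`. -/
theorem stmt5 {k : ℕ} (M : Matrix (Fin k) (Fin k) ℝ)
    (hM : ColStoch M) (hirr : Irred M)
    (z : Fin k → ℝ) (hz : ∀ i, 0 ≤ z i) (hzsum : ∑ i, z i = 1) (hzinv : M.mulVec z = z)
    (v w : Fin k → ℝ) (hv : ∑ i, v i ≠ 0) (hw : ∑ i, z i * w i ≠ 0) :
    IsUnit (1 - M + vecMulVec v w) ∧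
      z = (1 - M + vecMulVec v w)⁻¹.mulVec ((vecMulVec v w).mulVec z) := by
  classical
  obtain ⟨hMnn, hMcol⟩ := hM
  have hpow := pow_nonneg_entries M hMnn
  have hzpos : ∀ i, 0 < z i := by
    intro i
    obtain ⟨j, hj⟩ : ∃ j, z j ≠ 0 := by
      by_contra h
      push_neg at h
      rw [Finset.sum_eq_zero (fun j _ => h j)] at hzsum
      norm_num at hzsum
    have hzj : 0 < z j := lt_of_le_of_ne (hz j) (Ne.symm hj)
    obtain ⟨n, hn, hMn⟩ := hirr i j
    have hfix := pow_mulVec_fixed M hzinv n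
    have hzi : z i = ∑ l, (M ^ n) i l * z l := by
      rw [← congrFun hfix i, Matrix.mulVec, dotProduct]
    rw [hzi]
    have hterm : 0 < (M ^ n) i j * z j :=
      mul_pos (lt_of_le_of_ne (hpow n i j) (Ne.symm hMn)) hzj
    have hle := Finset.single_le_sum (f := fun l => (M ^ n) i l * z l)
      (fun l _ => mul_nonneg (hpow n i l) (hz l)) (Finset.mem_univ j)
    exact lt_of_lt_of_le hterm (by simpa using hle)
  have hfixed : ∀ x : Fin k → ℝ, M.mulVec x = x → ∃ c : ℝ, x = c • z := by
    intro x hx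
    have hne : (Finset.univ : Finset (Fin k)).Nonempty := by
      by_contra h
      rw [Finset.not_nonempty_iff_eq_empty] at h
      rw [h] at hzsum
      simp at hzsum
    obtain ⟨i₀, _, hmin⟩ := Finset.exists_min_image Finset.univ (fun i => x i / z i) hne
    set c := x i₀ / z i₀ with hc
    refine ⟨c, ?_⟩
    set y : Fin k → ℝ := x - c • z with hy
    have hynn : ∀ i, 0 ≤ y i := by
      intro i
      have h1 : c ≤ x i / z i := hmin i (Finset.mem_univ i)
      have h2 := (le_div_iff₀ (hzpos i)).mp h1
      simp only [hy, Pi.sub_apply, Pi.smul_apply, smul_eq_mul]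
      linarith
    have hyfix : M.mulVec y = y := by
      rw [hy, Matrix.mulVec_sub, Matrix.mulVec_smul, hx, hzinv]
    have hyi0 : y i₀ = 0 := by
      simp only [hy, hc, Pi.sub_apply, Pi.smul_apply, smul_eq_mul]
      rw [div_mul_cancel₀ _ (ne_of_gt (hzpos i₀)), sub_self]
    have hyzero : ∀ i, y i = 0 := by
      intro i
      obtain ⟨n, hn, hMn⟩ := hirr i₀ i
      have hfix := pow_mulVec_fixed M hyfix n
      have hsum : ∑ l, (M ^ n) i₀ l * y l = 0 := by
        rw [show ∑ l, (M ^ n) i₀ l * y l = ((M ^ n).mulVec y) i₀ from rfl, hfix, hyi0]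
      have heach := (Finset.sum_eq_zero_iff_of_nonneg
        (fun l _ => mul_nonneg (hpow n i₀ l) (hynn l))).mp hsum i (Finset.mem_univ i)
      rcases mul_eq_zero.mp heach with h | h
      · exact absurd h hMn
      · exact h
    have : x - c • z = 0 := hy ▸ funext hyzero
    exact sub_eq_zero.mp this
  set B := 1 - M + vecMulVec v w with hB
  -- expand B.mulVec
  have hBmul : ∀ x : Fin k → ℝ, ∀ i,
      B.mulVec x i = x i - M.mulVec x i + v i * ∑ j, w j * x j := by
    intro x i
    simp only [hB, Matrix.add_mulVec, Matrix.sub_mulVec, Matrix.one_mulVec, Pi.add_apply,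
      Pi.sub_apply]
    congr 1
    simp only [Matrix.mulVec, dotProduct, Matrix.vecMulVec_apply]
    rw [Finset.mul_sum]
    exact Finset.sum_congr rfl fun j _ => by ring
  have hker : ∀ x : Fin k → ℝ, B.mulVec x = 0 → x = 0 := by
    intro x hx
    have hxi : ∀ i, x i - M.mulVec x i + v i * ∑ j, w j * x j = 0 := by
      intro i; rw [← hBmul x i, hx]; rfl
    have hMsum : ∑ i, M.mulVec x i = ∑ i, x i := by
      simp only [Matrix.mulVec, dotProduct]
      rw [Finset.sum_comm]
      exact Finset.sum_congr rfl fun j _ => by rw [← Finset.sum_mul, hMcol j, one_mul]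
    have hsum0 : (∑ i, v i) * (∑ j, w j * x j) = 0 := by
      have := Finset.sum_congr rfl (fun i (_ : i ∈ Finset.univ) => hxi i)
      rw [Finset.sum_const_zero] at this
      rw [Finset.sum_add_distrib, Finset.sum_sub_distrib, hMsum] at this
      rw [← Finset.sum_mul] at this
      linarith
    have hwx : ∑ j, w j * x j = 0 := by
      rcases mul_eq_zero.mp hsum0 with h | h
      · exact absurd h hv
      · exact h
    have hxfix : M.mulVec x = x := by
      funext i
      have := hxi i
      rw [hwx, mul_zero, add_zero] at this
      linarith
    obtain ⟨c, hcz⟩ := hfixed x hxfix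
    have hc0 : c = 0 := by
      rw [hcz] at hwx
      simp only [Pi.smul_apply, smul_eq_mul] at hwx
      have : c * ∑ j, z j * w j = 0 := by
        rw [Finset.mul_sum, ← hwx]
        exact Finset.sum_congr rfl fun j _ => by ring
      rcases mul_eq_zero.mp this with h | h
      · exact h
      · exact absurd h hw
    rw [hcz, hc0, zero_smul]
  have hdet : B.det ≠ 0 := by
    intro h
    obtain ⟨x, hx0, hx⟩ := Matrix.exists_mulVec_eq_zero_iff.mpr h
    exact hx0 (hker x hx)
  have hunit : IsUnit B := (Matrix.isUnit_iff_isUnit_det B).mpr (isUnit_iff_ne_zero.mpr hdet)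
  refine ⟨hunit, ?_⟩
  have hBz : B.mulVec z = (vecMulVec v w).mulVec z := by
    rw [hB, Matrix.add_mulVec, Matrix.sub_mulVec, Matrix.one_mulVec, hzinv]
    simp
  rw [← hBz, Matrix.mulVec_mulVec, Matrix.nonsing_inv_mul B (isUnit_iff_ne_zero.mpr hdet),
    Matrix.one_mulVec]
end

section
/- If P is irreducible and ν ∈ ℝ^N is a strictly positive probability vector, then the coarse matrix C(ν) = A P D(ν) is irreducible. Consequently, if the initial approximation μ⁰ > 0, all IAD iterates μ^k are well-defined and strictly positive. -/
open Matrix BigOperators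

section Aux

variable {N n : ℕ}

lemma agg_mulVec (f : Fin N → Fin n) (ν : Fin N → ℝ) (i : Fin n) :
    (Agg f).mulVec ν i = ∑ x, if f x = i then ν x else 0 := by
  simp [Matrix.mulVec, Agg, dotProduct, ite_mul]

lemma agg_pos {f : Fin N → Fin n} (hf : Function.Surjective f) {ν : Fin N → ℝ}
    (hν : ∀ i, 0 < ν i) (i : Fin n) : 0 < (Agg f).mulVec ν i := by
  rw [agg_mulVec]
  obtain ⟨x, hx⟩ := hf i
  refine Finset.sum_pos' (fun j _ => ?_) ⟨x, Finset.mem_univ x, ?_⟩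
  · split_ifs with h
    · exact (hν j).le
    · exact le_refl 0
  · rw [if_pos hx]; exact hν x

lemma disagg_nonneg {f : Fin N → Fin n} (hf : Function.Surjective f) {ν : Fin N → ℝ}
    (hν : ∀ i, 0 < ν i) (j : Fin N) (i : Fin n) : 0 ≤ Disagg f ν j i := by
  unfold Disagg
  split_ifs with h
  · exact div_nonneg (hν j).le (agg_pos hf hν i).le
  · exact le_refl 0

lemma coarse_entry (P : Matrix (Fin N) (Fin N) ℝ) (f : Fin N → Fin n) (ν : Fin N → ℝ)
    (i j : Fin n) :
    CoarseC P f ν i j = ∑ l, (Agg f * P) i l * Disagg f ν l j := by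
  simp [CoarseC, Matrix.mul_apply]

lemma aggP_nonneg {P : Matrix (Fin N) (Fin N) ℝ} (hP : ∀ x y, 0 ≤ P x y)
    (f : Fin N → Fin n) (i : Fin n) (l : Fin N) : 0 ≤ (Agg f * P) i l := by
  rw [Matrix.mul_apply]
  refine Finset.sum_nonneg fun x _ => ?_
  unfold Agg
  split_ifs with h
  · simpa using hP x l
  · simp

lemma coarse_nonneg {P : Matrix (Fin N) (Fin N) ℝ} (hP : ∀ x y, 0 ≤ P x y)
    {f : Fin N → Fin n} (hf : Function.Surjective f) {ν : Fin N → ℝ}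
    (hν : ∀ i, 0 < ν i) (i j : Fin n) : 0 ≤ CoarseC P f ν i j := by
  rw [coarse_entry]
  exact Finset.sum_nonneg fun l _ =>
    mul_nonneg (aggP_nonneg hP f i l) (disagg_nonneg hf hν l j)

lemma coarse_pos {P : Matrix (Fin N) (Fin N) ℝ} (hP : ∀ x y, 0 ≤ P x y)
    {f : Fin N → Fin n} (hf : Function.Surjective f) {ν : Fin N → ℝ}
    (hν : ∀ i, 0 < ν i) {x y : Fin N} (hxy : P x y ≠ 0) :
    0 < CoarseC P f ν (f x) (f y) := by
  rw [coarse_entry]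
  refine Finset.sum_pos' (fun l _ =>
    mul_nonneg (aggP_nonneg hP f (f x) l) (disagg_nonneg hf hν l (f y)))
    ⟨y, Finset.mem_univ y, ?_⟩
  have h1 : 0 < (Agg f * P) (f x) y := by
    rw [Matrix.mul_apply]
    refine Finset.sum_pos' (fun z _ => ?_) ⟨x, Finset.mem_univ x, ?_⟩
    · unfold Agg; split_ifs with h
      · simpa using hP z y
      · simp
    · simpa [Agg] using lt_of_le_of_ne (hP x y) (Ne.symm hxy)
  have h2 : 0 < Disagg f ν y (f y) := by
    unfold Disagg
    rw [if_pos rfl]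
    exact div_pos (hν y) (agg_pos hf hν (f y))
  exact mul_pos h1 h2

lemma pow_entry_nonneg {m : Type*} [Fintype m] [DecidableEq m]
    {M : Matrix m m ℝ} (hM : ∀ i j, 0 ≤ M i j) :
    ∀ k i j, 0 ≤ (M ^ k) i j := by
  intro k
  induction k with
  | zero => intro i j; simp [Matrix.one_apply]; split_ifs <;> norm_num
  | succ k ih =>
      intro i j
      rw [pow_succ, Matrix.mul_apply]
      exact Finset.sum_nonneg fun l _ => mul_nonneg (ih i l) (hM l j)

lemma coarse_pow_pos {P : Matrix (Fin N) (Fin N) ℝ} (hP : ∀ x y, 0 ≤ P x y)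
    {f : Fin N → Fin n} (hf : Function.Surjective f) {ν : Fin N → ℝ}
    (hν : ∀ i, 0 < ν i) :
    ∀ k (x y : Fin N), (P ^ (k + 1)) x y ≠ 0 →
      0 < (CoarseC P f ν ^ (k + 1)) (f x) (f y) := by
  intro k
  induction k with
  | zero =>
      intro x y h
      rw [pow_one] at h ⊢
      exact coarse_pos hP hf hν h
  | succ k ih =>
      intro x y h
      rw [pow_succ'] at h
      rw [Matrix.mul_apply] at h
      obtain ⟨w, _, hw⟩ := Finset.exists_ne_zero_of_sum_ne_zero h
      have hPxw : P x w ≠ 0 := fun h0 => hw (by simp [h0])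
      have hPk : (P ^ (k + 1)) w y ≠ 0 := fun h0 => hw (by simp [h0])
      have hC := ih w y hPk
      rw [pow_succ']
      rw [Matrix.mul_apply]
      refine Finset.sum_pos' (fun l _ => mul_nonneg (coarse_nonneg hP hf hν (f x) l)
        (pow_entry_nonneg (coarse_nonneg hP hf hν) (k + 1) l (f y)))
        ⟨f w, Finset.mem_univ (f w), mul_pos (coarse_pos hP hf hν hPxw) hC⟩

lemma coarse_irred {P : Matrix (Fin N) (Fin N) ℝ} (hP : ∀ x y, 0 ≤ P x y)
    (hirr : Irred P) {f : Fin N → Fin n} (hf : Function.Surjective f)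
    {ν : Fin N → ℝ} (hν : ∀ i, 0 < ν i) : Irred (CoarseC P f ν) := by
  intro i j
  obtain ⟨x, hx⟩ := hf i
  obtain ⟨y, hy⟩ := hf j
  obtain ⟨k, hk, hkP⟩ := hirr x y
  obtain ⟨m, rfl⟩ := Nat.exists_eq_succ_of_ne_zero (Nat.pos_iff_ne_zero.mp hk)
  exact ⟨m + 1, Nat.succ_pos m, by
    have := coarse_pow_pos hP hf hν m x y hkP
    rw [hx, hy] at this
    exact ne_of_gt this⟩

lemma fixed_pow {m : Type*} [Fintype m] [DecidableEq m]
    {M : Matrix m m ℝ} {z : m → ℝ} (hz : M.mulVec z = z) :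
    ∀ k, (M ^ k).mulVec z = z := by
  intro k
  induction k with
  | zero => simp
  | succ k ih =>
      rw [pow_succ', ← Matrix.mulVec_mulVec, ih, hz]

lemma inv_vec_pos {m : Type*} [Fintype m] [DecidableEq m]
    {M : Matrix m m ℝ} (hM : ∀ i j, 0 ≤ M i j) (hirr : Irred M)
    {z : m → ℝ} (hz0 : ∀ i, 0 ≤ z i) (hz1 : ∑ i, z i = 1)
    (hzfix : M.mulVec z = z) : ∀ j, 0 < z j := by
  have hne : ∃ i, z i ≠ 0 := by
    by_contra h
    push_neg at h
    simp [h] at hz1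
  obtain ⟨i, hi⟩ := hne
  have hzi : 0 < z i := lt_of_le_of_ne (hz0 i) (Ne.symm hi)
  intro j
  obtain ⟨k, hk, hkM⟩ := hirr j i
  have hMk : 0 < (M ^ k) j i := lt_of_le_of_ne (pow_entry_nonneg hM k j i) (Ne.symm hkM)
  have hfix := fixed_pow hzfix k
  have hzj : z j = ∑ l, (M ^ k) j l * z l := by
    conv_lhs => rw [← hfix]
    simp [Matrix.mulVec, dotProduct]
  rw [hzj]
  refine Finset.sum_pos' (fun l _ => mul_nonneg (pow_entry_nonneg hM k j l) (hz0 l))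
    ⟨i, Finset.mem_univ i, mul_pos hMk hzi⟩

lemma row_ex_pos {m : Type*} [Fintype m] [DecidableEq m]
    {M : Matrix m m ℝ} (hM : ∀ i j, 0 ≤ M i j) (hirr : Irred M) (x : m) :
    ∃ y, 0 < M x y := by
  by_contra h
  push_neg at h
  have hrow : ∀ y, M x y = 0 := fun y => le_antisymm (h y) (hM x y)
  have hz : ∀ k j, (M ^ (k + 1)) x j = 0 := by
    intro k j
    rw [pow_succ', Matrix.mul_apply]
    simp [hrow]
  obtain ⟨k, hk, hkM⟩ := hirr x x
  obtain ⟨l, rfl⟩ := Nat.exists_eq_succ_of_ne_zero (Nat.pos_iff_ne_zero.mp hk)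
  exact hkM (hz l x)

lemma disagg_mulVec {f : Fin N → Fin n} (ν : Fin N → ℝ) (z : Fin n → ℝ) (j : Fin N) :
    (Disagg f ν).mulVec z j = ν j / (Agg f).mulVec ν (f j) * z (f j) := by
  have h1 : ∀ i, Disagg f ν j i * z i
      = if f j = i then ν j / (Agg f).mulVec ν i * z i else 0 := by
    intro i; unfold Disagg; split_ifs <;> simp
  calc (Disagg f ν).mulVec z j = ∑ i, Disagg f ν j i * z i := by
        simp [Matrix.mulVec, dotProduct]
    _ = ∑ i, if f j = i then ν j / (Agg f).mulVec ν i * z i else 0 := by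
        simp only [h1]
    _ = _ := by rw [Finset.sum_ite_eq]; simp

lemma disagg_colsum {f : Fin N → Fin n} (hf : Function.Surjective f) {ν : Fin N → ℝ}
    (hν : ∀ i, 0 < ν i) (i : Fin n) : ∑ j, Disagg f ν j i = 1 := by
  unfold Disagg
  have : ∀ j : Fin N, (if f j = i then ν j / (Agg f).mulVec ν i else 0)
      = (if f j = i then ν j else 0) / (Agg f).mulVec ν i := by
    intro j; split_ifs <;> simp
  simp only [this]
  rw [← Finset.sum_div, ← agg_mulVec]
  exact div_self (ne_of_gt (agg_pos hf hν i))

lemma sum_mulVec {a b : ℕ} (M : Matrix (Fin a) (Fin b) ℝ) (v : Fin b → ℝ) :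
    ∑ j, M.mulVec v j = ∑ y, (∑ j, M j y) * v y := by
  simp only [Matrix.mulVec, dotProduct]
  rw [Finset.sum_comm]
  congr 1
  ext y
  rw [Finset.sum_mul]

end Aux

/-- if `P` is irreducible and `ν > 0` is a probability vector then
`C(ν) = A P D(ν)` is irreducible; consequently all IAD iterates starting from a positive
probability vector are well-defined and strictly positive. -/
theorem stmt6 {N n : ℕ} (P : Matrix (Fin N) (Fin N) ℝ)
    (μ : Fin N → ℝ) (hP : ColStoch P) (hirr : Irred P)
    (hμpos : ∀ i, 0 < μ i) (hμsum : ∑ i, μ i = 1) (hinv : P.mulVec μ = μ)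
    (f : Fin N → Fin n) (hf : Function.Surjective f) :
    (∀ ν : Fin N → ℝ, (∀ i, 0 < ν i) → (∑ i, ν i = 1) → Irred (CoarseC P f ν)) ∧
      (∀ (μs : ℕ → Fin N → ℝ) (zs : ℕ → Fin n → ℝ),
        (∀ i, 0 < μs 0 i) → (∑ i, μs 0 i = 1) →
        (∀ k, (∀ i, 0 ≤ zs k i) ∧ (∑ i, zs k i = 1) ∧
          (CoarseC P f (μs k)).mulVec (zs k) = zs k) →
        (∀ k, μs (k + 1) = P.mulVec ((Disagg f (μs k)).mulVec (zs k))) →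
        ∀ k, (∀ i, 0 < μs k i) ∧ Irred (CoarseC P f (μs k))) := by
  obtain ⟨hPnn, hPcol⟩ := hP
  have part1 : ∀ ν : Fin N → ℝ, (∀ i, 0 < ν i) → (∑ i, ν i = 1) →
      Irred (CoarseC P f ν) := fun ν hν _ => coarse_irred hPnn hirr hf hν
  refine ⟨part1, ?_⟩
  intro μs zs h0pos h0sum hz hrec
  -- strengthen: positivity plus sum-one propagates
  have key : ∀ k, (∀ i, 0 < μs k i) ∧ (∑ i, μs k i = 1) := by
    intro k
    induction k with
    | zero => exact ⟨h0pos, h0sum⟩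
    | succ k ih =>
        obtain ⟨hpos, hsum⟩ := ih
        obtain ⟨hz0, hz1, hzfix⟩ := hz k
        have hCirr : Irred (CoarseC P f (μs k)) := part1 (μs k) hpos hsum
        have hCnn : ∀ i j, 0 ≤ CoarseC P f (μs k) i j := coarse_nonneg hPnn hf hpos
        have hzpos : ∀ j, 0 < zs k j := inv_vec_pos hCnn hCirr hz0 hz1 hzfix
        set w : Fin N → ℝ := (Disagg f (μs k)).mulVec (zs k) with hw
        have hwpos : ∀ j, 0 < w j := by
          intro j
          rw [hw, disagg_mulVec]
          exact mul_pos (div_pos (hpos j) (agg_pos hf hpos (f j))) (hzpos (f j))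
        have hwsum : ∑ j, w j = 1 := by
          rw [hw, sum_mulVec]
          have : ∀ y, (∑ j, Disagg f (μs k) j y) * zs k y = zs k y := by
            intro y; rw [disagg_colsum hf hpos, one_mul]
          simp only [this]
          exact hz1
        constructor
        · intro i
          rw [hrec k]
          show 0 < P.mulVec w i
          obtain ⟨y, hy⟩ := row_ex_pos hPnn hirr i
          refine Finset.sum_pos' (fun l _ => mul_nonneg (hPnn i l) (hwpos l).le)
            ⟨y, Finset.mem_univ y, mul_pos hy (hwpos y)⟩
        · rw [hrec k]
          show ∑ j, P.mulVec w j = 1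
          rw [sum_mulVec]
          have : ∀ y, (∑ j, P j y) * w y = w y := by
            intro y; rw [hPcol y, one_mul]
          simp only [this]
          exact hwsum
  intro k
  obtain ⟨hpos, hsum⟩ := key k
  exact ⟨hpos, part1 (μs k) hpos hsum⟩
end

section
/- Let J(μ) = P̂ (I − S(μ)) and Π(μ) = D(μ)A. Then J(μ) Π(μ) = 0 and Π(μ) J(μ) = Π(μ) − S(μ). In particular J(μ) = J(μ)(I − Π(μ)) and σ(J(μ)) = σ((I − Π(μ)) J(μ)). -/
open Matrix BigOperators

namespace Stmt11Aux

open Matrix Finset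

variable {N n : ℕ}

lemma agg_mulVec_apply (f : Fin N → Fin n) (v : Fin N → ℝ) (i : Fin n) :
    (Agg f).mulVec v i = ∑ j, if f j = i then v j else 0 := by
  simp [Matrix.mulVec, dotProduct, Agg, ite_mul]

lemma sum_agg_mulVec (f : Fin N → Fin n) (v : Fin N → ℝ) :
    ∑ i, (Agg f).mulVec v i = ∑ j, v j := by
  simp only [agg_mulVec_apply]
  rw [Finset.sum_comm]
  simp [Finset.sum_ite_eq]

lemma nu_pos (f : Fin N → Fin n) (μ : Fin N → ℝ) (hf : Function.Surjective f)
    (hμ : ∀ j, 0 < μ j) (i : Fin n) : 0 < (Agg f).mulVec μ i := by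
  rw [agg_mulVec_apply]
  obtain ⟨j, hj⟩ := hf i
  refine Finset.sum_pos' (fun k _ => ?_) ⟨j, Finset.mem_univ j, ?_⟩
  · split
    · exact (hμ k).le
    · exact le_rfl
  · simp [hj, hμ j]

lemma disagg_mulVec_apply (f : Fin N → Fin n) (μ : Fin N → ℝ) (x : Fin n → ℝ) (b : Fin N) :
    (Disagg f μ).mulVec x b = μ b / (Agg f).mulVec μ (f b) * x (f b) := by
  simp [Matrix.mulVec, dotProduct, Disagg, ite_mul, Finset.sum_ite_eq]

lemma agg_mul_disagg (f : Fin N → Fin n) (μ : Fin N → ℝ) (hf : Function.Surjective f)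
    (hμ : ∀ j, 0 < μ j) : Agg f * Disagg f μ = 1 := by
  ext i k
  rw [Matrix.mul_apply, Matrix.one_apply]
  have hstep : ∀ j, Agg f i j * Disagg f μ j k =
      if f j = i then (if i = k then μ j / (Agg f).mulVec μ k else 0) else 0 := by
    intro j
    simp only [Agg, Disagg]
    by_cases h1 : f j = i
    · by_cases h2 : i = k
      · simp [h1, h2, h1.trans h2]
      · have : ¬ (f j = k) := fun hc => h2 (h1.symm.trans hc)
        simp [h1, h2, this]
    · simp [h1]
  rw [Finset.sum_congr rfl (fun j _ => hstep j)]
  by_cases h2 : i = k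
  · subst h2
    simp only [if_pos rfl, if_true]
    have h3 : ∀ j, (if f j = i then μ j / (Agg f).mulVec μ i else 0)
        = (if f j = i then μ j else 0) / (Agg f).mulVec μ i := by
      intro j; split <;> simp
    rw [Finset.sum_congr rfl (fun j _ => h3 j), ← Finset.sum_div, ← agg_mulVec_apply,
      div_self (nu_pos f μ hf hμ i).ne']
  · simp [h2]

lemma disagg_mulVec_nu (f : Fin N → Fin n) (μ : Fin N → ℝ) (hf : Function.Surjective f)
    (hμ : ∀ j, 0 < μ j) : (Disagg f μ).mulVec ((Agg f).mulVec μ) = μ := by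
  funext b
  rw [disagg_mulVec_apply]
  exact div_mul_cancel₀ (μ b) (nu_pos f μ hf hμ (f b)).ne'


lemma ker_B (P : Matrix (Fin N) (Fin N) ℝ) (μ : Fin N → ℝ) (hP : ColStoch P)
    (hirr : Irred P) (hμpos : ∀ i, 0 < μ i)
    (hinv : P.mulVec μ = μ) (f : Fin N → Fin n) (hf : Function.Surjective f)
    (x : Fin n → ℝ) (hx : (Agg f * (1 - P + vecMulVec μ 1) * Disagg f μ).mulVec x = 0) :
    x = 0 := by
  rcases Nat.eq_zero_or_pos n with hn | hn
  · subst hn; exact funext fun i => i.elim0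
  obtain ⟨b0, hb0⟩ := hf ⟨0, hn⟩
  set ν : Fin n → ℝ := (Agg f).mulVec μ with hν
  have hνpos : ∀ i, 0 < ν i := nu_pos f μ hf hμpos
  set z : Fin N → ℝ := (Disagg f μ).mulVec x with hzdef
  set s : ℝ := ∑ b, z b with hsdef
  -- rewrite the kernel equation
  have hx1 : (Agg f).mulVec ((1 - P + vecMulVec μ 1).mulVec z) = 0 := by
    rw [Matrix.mulVec_mulVec, Matrix.mulVec_mulVec]
    exact hx
  have hXz : (1 - P + vecMulVec μ 1).mulVec z = z - P.mulVec z + s • μ := by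
    rw [Matrix.add_mulVec, Matrix.sub_mulVec, Matrix.one_mulVec]
    congr 1
    funext a
    simp only [Matrix.mulVec, dotProduct, vecMulVec, Matrix.of_apply, Pi.one_apply,
      mul_one, Pi.smul_apply, smul_eq_mul, ← Finset.mul_sum]
    exact mul_comm _ _
  have hAz : (Agg f).mulVec z = x := by
    rw [hzdef, Matrix.mulVec_mulVec, agg_mul_disagg f μ hf hμpos, Matrix.one_mulVec]
  have heq : x - (Agg f).mulVec (P.mulVec z) + s • ν = 0 := by
    rw [hν, ← hAz]
    rw [hXz] at hx1
    rw [Matrix.mulVec_add, Matrix.mulVec_sub, Matrix.mulVec_smul] at hx1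
    exact hx1
  -- column sums
  have hsumP : ∀ v : Fin N → ℝ, ∑ a, P.mulVec v a = ∑ b, v b := by
    intro v
    simp only [Matrix.mulVec, dotProduct]
    rw [Finset.sum_comm]
    refine Finset.sum_congr rfl fun b _ => ?_
    rw [← Finset.sum_mul, hP.2 b, one_mul]
  have hxz : ∑ i, x i = s := by rw [← hAz, sum_agg_mulVec]
  -- s = 0
  have hs0 : s = 0 := by
    have h1 := congrArg (fun v => ∑ i, v i) heq
    simp only [Pi.add_apply, Pi.sub_apply, Pi.smul_apply, smul_eq_mul, Pi.zero_apply,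
      Finset.sum_add_distrib, Finset.sum_sub_distrib, ← Finset.mul_sum,
      Finset.sum_const_zero] at h1
    rw [sum_agg_mulVec, hsumP] at h1
    have hνμ : ∑ i, ν i = ∑ b, μ b := by rw [hν, sum_agg_mulVec]
    have hμs : 0 < ∑ b, μ b := Finset.sum_pos (fun b _ => hμpos b) ⟨b0, Finset.mem_univ b0⟩
    rw [hxz, hνμ] at h1
    nlinarith [hμs]
  have hmain : (Agg f).mulVec (P.mulVec z) = x := by
    funext i
    have h2 := congrFun heq i
    simp only [Pi.add_apply, Pi.sub_apply, Pi.smul_apply, smul_eq_mul, Pi.zero_apply, hs0,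
      zero_mul] at h2
    linarith
  -- max principle
  obtain ⟨i0, -, hmax⟩ := Finset.exists_max_image Finset.univ (fun i => x i / ν i)
    ⟨⟨0, hn⟩, Finset.mem_univ _⟩
  set M : ℝ := x i0 / ν i0 with hM
  have hle : ∀ i, x i ≤ M * ν i := by
    intro i
    exact (div_le_iff₀ (hνpos i)).mp (hmax i (Finset.mem_univ i))
  have hzb : ∀ b, z b = μ b / ν (f b) * x (f b) := by
    intro b; rw [hzdef, disagg_mulVec_apply]
  have hzle : ∀ b, z b ≤ M * μ b := by
    intro b
    rw [hzb b]
    calc μ b / ν (f b) * x (f b) ≤ μ b / ν (f b) * (M * ν (f b)) := by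
          exact mul_le_mul_of_nonneg_left (hle (f b))
            (div_nonneg (hμpos b).le (hνpos (f b)).le)
      _ = M * μ b := by
          rw [mul_comm M (ν (f b)), ← mul_assoc, div_mul_cancel₀ _ (hνpos (f b)).ne', mul_comm]
  have hPz : ∀ a, P.mulVec z a ≤ M * μ a := by
    intro a
    have h1 : P.mulVec z a = ∑ b, P a b * z b := rfl
    have h2 : ∑ b, P a b * (M * μ b) = M * μ a := by
      have h3 : ∑ b, P a b * (M * μ b) = M * ∑ b, P a b * μ b := by
        rw [Finset.mul_sum]; exact Finset.sum_congr rfl fun b _ => by ring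
      rw [h3]
      have h4 : ∑ b, P a b * μ b = μ a := congrFun hinv a
      rw [h4]
    rw [h1, ← h2]
    exact Finset.sum_le_sum fun b _ => mul_le_mul_of_nonneg_left (hzle b) (hP.1 a b)
  -- one-step closure
  have key : ∀ a b, x (f a) = M * ν (f a) → P a b ≠ 0 → x (f b) = M * ν (f b) := by
    intro a b ha hab
    have h1 : ∑ c, (if f c = f a then P.mulVec z c else 0)
        = ∑ c, (if f c = f a then M * μ c else 0) := by
      have l1 : ∑ c, (if f c = f a then P.mulVec z c else 0) = x (f a) := by
        rw [← agg_mulVec_apply, hmain]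
      have l2 : ∑ c, (if f c = f a then M * μ c else 0) = M * ν (f a) := by
        have : ∀ c, (if f c = f a then M * μ c else 0) = M * (if f c = f a then μ c else 0) := by
          intro c; split <;> simp
        rw [Finset.sum_congr rfl fun c _ => this c, ← Finset.mul_sum, hν, agg_mulVec_apply]
      rw [l1, l2, ha]
    have h2 : ∀ c, (if f c = f a then P.mulVec z c else 0) ≤ (if f c = f a then M * μ c else 0) := by
      intro c; split
      · exact hPz c
      · exact le_rfl
    have h3 := (Finset.sum_eq_sum_iff_of_le (fun c _ => h2 c)).mp h1 a (Finset.mem_univ a)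
    simp only [if_pos rfl, if_true] at h3
    -- second level
    have h5 : ∑ c, P a c * z c = ∑ c, P a c * (M * μ c) := by
      have l1 : ∑ c, P a c * z c = P.mulVec z a := rfl
      have l2 : ∑ c, P a c * (M * μ c) = M * μ a := by
        have l3 : ∑ c, P a c * (M * μ c) = M * ∑ c, P a c * μ c := by
          rw [Finset.mul_sum]; exact Finset.sum_congr rfl fun c _ => by ring
        rw [l3]
        have l4 : ∑ c, P a c * μ c = μ a := congrFun hinv a
        rw [l4]
      rw [l1, l2, h3]
    have h6 := (Finset.sum_eq_sum_iff_of_le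
      (fun c _ => mul_le_mul_of_nonneg_left (hzle c) (hP.1 a c))).mp h5 b (Finset.mem_univ b)
    have h7 : z b = M * μ b := mul_left_cancel₀ hab h6
    rw [hzb b] at h7
    have hμb := (hμpos b).ne'
    have hνb := (hνpos (f b)).ne'
    rw [div_mul_eq_mul_div, div_eq_iff hνb] at h7
    have h8 : μ b * x (f b) = μ b * (M * ν (f b)) := by linear_combination h7
    exact mul_left_cancel₀ hμb h8
  -- k-step closure
  have keyk : ∀ k : ℕ, ∀ a b, x (f a) = M * ν (f a) → (P ^ k) a b ≠ 0 → x (f b) = M * ν (f b) := by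
    intro k
    induction k with
    | zero =>
      intro a b ha h
      rw [pow_zero, Matrix.one_apply] at h
      by_cases hab : a = b
      · rwa [← hab]
      · simp [hab] at h
    | succ k ih =>
      intro a b ha h
      rw [pow_succ', Matrix.mul_apply] at h
      obtain ⟨c, -, hc⟩ := Finset.exists_ne_zero_of_sum_ne_zero h
      exact ih c b (key a c ha (left_ne_zero_of_mul hc)) (right_ne_zero_of_mul hc)
  -- all entries achieve the max
  have hall : ∀ i, x i = M * ν i := by
    intro i
    obtain ⟨a0, ha0⟩ := hf i0
    obtain ⟨b, hb⟩ := hf i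
    have hstart : x (f a0) = M * ν (f a0) := by
      rw [ha0, hM, div_mul_cancel₀ _ (hνpos i0).ne']
    obtain ⟨k, -, hkk⟩ := hirr a0 b
    have := keyk k a0 b hstart hkk
    rwa [hb] at this
  -- conclude M = 0
  have hνsum : 0 < ∑ i, ν i := Finset.sum_pos (fun i _ => hνpos i) ⟨i0, Finset.mem_univ i0⟩
  have hM0 : M = 0 := by
    have h1 : ∑ i, x i = M * ∑ i, ν i := by
      rw [Finset.mul_sum]; exact Finset.sum_congr rfl fun i _ => hall i
    rw [hxz, hs0] at h1
    nlinarith [hνsum]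
  funext i
  rw [Pi.zero_apply, hall i, hM0, zero_mul]

lemma main_alg (Phat : Matrix (Fin N) (Fin N) ℝ)
    (A' Q : Matrix (Fin n) (Fin N) ℝ) (D' : Matrix (Fin N) (Fin n) ℝ)
    (hAD : A' * D' = 1) (hB : IsUnit (Q * D').det)
    (hAP : A' * Phat = A' - Q) :
    Phat * (1 - D' * (Q * D')⁻¹ * Q) * (D' * A') = 0 ∧
      (D' * A') * (Phat * (1 - D' * (Q * D')⁻¹ * Q)) =
        D' * A' - D' * (Q * D')⁻¹ * Q := by
  have h1 : (Q * D')⁻¹ * (Q * D') = 1 := Matrix.nonsing_inv_mul _ hB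
  have h2 : (Q * D') * (Q * D')⁻¹ = 1 := Matrix.mul_nonsing_inv _ hB
  have hSP : (D' * (Q * D')⁻¹ * Q) * (D' * A') = D' * A' := by
    calc (D' * (Q * D')⁻¹ * Q) * (D' * A')
        = D' * ((Q * D')⁻¹ * ((Q * D') * A')) := by simp only [Matrix.mul_assoc]
      _ = D' * A' := by rw [← Matrix.mul_assoc ((Q * D')⁻¹), h1, Matrix.one_mul]
  have hQS : Q * (D' * (Q * D')⁻¹ * Q) = Q := by
    calc Q * (D' * (Q * D')⁻¹ * Q)
        = (Q * D') * (Q * D')⁻¹ * Q := by simp only [Matrix.mul_assoc]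
      _ = Q := by rw [h2, Matrix.one_mul]
  have hPS : (D' * A') * (D' * (Q * D')⁻¹ * Q) = D' * (Q * D')⁻¹ * Q := by
    calc (D' * A') * (D' * (Q * D')⁻¹ * Q)
        = D' * ((A' * D') * ((Q * D')⁻¹ * Q)) := by simp only [Matrix.mul_assoc]
      _ = D' * (Q * D')⁻¹ * Q := by rw [hAD, Matrix.one_mul, ← Matrix.mul_assoc]
  constructor
  · have h3 : (1 - D' * (Q * D')⁻¹ * Q) * (D' * A') = 0 := by
      rw [Matrix.sub_mul, Matrix.one_mul, hSP, sub_self]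
    rw [Matrix.mul_assoc, h3, Matrix.mul_zero]
  · have hQ1S : Q * (1 - D' * (Q * D')⁻¹ * Q) = 0 := by
      rw [Matrix.mul_sub, Matrix.mul_one, hQS, sub_self]
    have hPi1S : (D' * A') * (1 - D' * (Q * D')⁻¹ * Q) = D' * A' - D' * (Q * D')⁻¹ * Q := by
      rw [Matrix.mul_sub, Matrix.mul_one, hPS]
    calc (D' * A') * (Phat * (1 - D' * (Q * D')⁻¹ * Q))
        = (D' * (A' * Phat)) * (1 - D' * (Q * D')⁻¹ * Q) := by simp only [Matrix.mul_assoc]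
      _ = (D' * (A' - Q)) * (1 - D' * (Q * D')⁻¹ * Q) := by rw [hAP]
      _ = (D' * A') * (1 - D' * (Q * D')⁻¹ * Q)
            - D' * (Q * (1 - D' * (Q * D')⁻¹ * Q)) := by
          rw [Matrix.mul_sub D' A' Q, Matrix.sub_mul]
          simp only [Matrix.mul_assoc]
      _ = D' * A' - D' * (Q * D')⁻¹ * Q := by
          rw [hQ1S, Matrix.mul_zero, sub_zero, hPi1S]

lemma mapC_mul (M1 M2 : Matrix (Fin N) (Fin N) ℝ) :
    (M1 * M2).map Complex.ofReal = M1.map Complex.ofReal * M2.map Complex.ofReal := by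
  ext i j
  simp [Matrix.map_apply, Matrix.mul_apply]

lemma zero_mem_specC (M : Matrix (Fin N) (Fin N) ℝ) (h : M.det = 0) : (0 : ℂ) ∈ specC M := by
  rw [specC, spectrum.zero_mem_iff]
  intro hu
  have h1 := (Matrix.isUnit_iff_isUnit_det _).mp hu
  have h2 : (M.map Complex.ofReal).det = 0 := by
    have h3 := RingHom.map_det Complex.ofRealHom M
    rw [h, map_zero] at h3
    rw [show (M.map Complex.ofReal) = Complex.ofRealHom.mapMatrix M from rfl, ← h3]
  rw [h2] at h1
  exact not_isUnit_zero h1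

end Stmt11Aux

/-- `J(μ)Π(μ) = 0`, `Π(μ)J(μ) = Π(μ) - S(μ)`; hence `J(μ) = J(μ)(I - Π(μ))`
and `σ(J(μ)) = σ((I - Π(μ))J(μ))`. -/
theorem stmt11 {N n : ℕ} (P : Matrix (Fin N) (Fin N) ℝ)
    (μ : Fin N → ℝ) (hP : ColStoch P) (hirr : Irred P)
    (hμpos : ∀ i, 0 < μ i) (hμsum : ∑ i, μ i = 1) (hinv : P.mulVec μ = μ)
    (f : Fin N → Fin n) (hf : Function.Surjective f) :
    Jop P f μ μ * PiProj f μ = 0 ∧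
      PiProj f μ * Jop P f μ μ = PiProj f μ - CoarseS P f μ μ ∧
      Jop P f μ μ = Jop P f μ μ * (1 - PiProj f μ) ∧
      specC (Jop P f μ μ) = specC ((1 - PiProj f μ) * Jop P f μ μ) := by
  have hAD := Stmt11Aux.agg_mul_disagg f μ hf hμpos
  have hdet : IsUnit ((Agg f * (1 - P + vecMulVec μ 1)) * Disagg f μ).det := by
    rw [isUnit_iff_ne_zero]
    intro h
    obtain ⟨v, hv0, hv⟩ := Matrix.exists_mulVec_eq_zero_iff.mpr h
    exact hv0 (Stmt11Aux.ker_B P μ hP hirr hμpos hinv f hf v hv)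
  have hAP : Agg f * hatP P μ = Agg f - Agg f * (1 - P + vecMulVec μ 1) := by
    unfold hatP
    rw [Matrix.mul_sub, Matrix.mul_add, Matrix.mul_sub, Matrix.mul_one]
    abel
  obtain ⟨c1, c2⟩ := Stmt11Aux.main_alg (hatP P μ) (Agg f)
    (Agg f * (1 - P + vecMulVec μ 1)) (Disagg f μ) hAD hdet hAP
  have g1 : Jop P f μ μ * PiProj f μ = 0 := c1
  have g2 : PiProj f μ * Jop P f μ μ = PiProj f μ - CoarseS P f μ μ := c2
  have g3 : Jop P f μ μ = Jop P f μ μ * (1 - PiProj f μ) := by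
    rw [Matrix.mul_sub, Matrix.mul_one, g1, sub_zero]
  have hPiμ : (PiProj f μ).mulVec μ = μ := by
    unfold PiProj
    rw [← Matrix.mulVec_mulVec, Stmt11Aux.disagg_mulVec_nu f μ hf hμpos]
  have hJμ : (Jop P f μ μ).mulVec μ = 0 := by
    have h4 : (Jop P f μ μ).mulVec ((PiProj f μ).mulVec μ) = 0 := by
      rw [Matrix.mulVec_mulVec, g1, Matrix.zero_mulVec]
    rwa [hPiμ] at h4
  have hJ2μ : ((1 - PiProj f μ) * Jop P f μ μ).mulVec μ = 0 := by
    rw [← Matrix.mulVec_mulVec, hJμ, Matrix.mulVec_zero]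
  refine ⟨g1, g2, g3, ?_⟩
  rcases Nat.eq_zero_or_pos N with hN | hN
  · subst hN
    congr 1
  · have hμne : μ ≠ 0 := fun h =>
      absurd (congrFun h ⟨0, hN⟩) (by simpa using (hμpos ⟨0, hN⟩).ne')
    have hd1 : (Jop P f μ μ).det = 0 := Matrix.exists_mulVec_eq_zero_iff.mp ⟨μ, hμne, hJμ⟩
    have hd2 : ((1 - PiProj f μ) * Jop P f μ μ).det = 0 :=
      Matrix.exists_mulVec_eq_zero_iff.mp ⟨μ, hμne, hJ2μ⟩
    have hz1 : (0 : ℂ) ∈ specC (Jop P f μ μ) := Stmt11Aux.zero_mem_specC _ hd1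
    have hz2 : (0 : ℂ) ∈ specC ((1 - PiProj f μ) * Jop P f μ μ) :=
      Stmt11Aux.zero_mem_specC _ hd2
    have hswap : specC (Jop P f μ μ) \ {0}
        = specC ((1 - PiProj f μ) * Jop P f μ μ) \ {0} := by
      conv_lhs => rw [g3]
      rw [specC, specC, Stmt11Aux.mapC_mul, Stmt11Aux.mapC_mul]
      exact spectrum.nonzero_mul_comm _ _
    ext w
    by_cases hw : w = 0
    · subst hw; simp [hz1, hz2]
    · constructor
      · intro h
        exact ((Set.ext_iff.mp hswap w).mp ⟨h, hw⟩).1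
      · intro h
        exact ((Set.ext_iff.mp hswap w).mpr ⟨h, hw⟩).1
end
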